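/- For every n ≥ 7, every connected n-vertex P-free 3-graph that contains a copy of the triangle C has at most 3n − 8 edges, and equality holds if and only if it is isomorphic to G_1(n) or G_2(n); that is, ex_conn(n;P|C) = 3n − 8 and Ex_conn(n;P|C) = {G_1(n), G_2(n)}. -/

import Mathlib

/-!
Common framework: 3-uniform hypergraphs (`3-graphs`) with vertex set a `Finset ℕ`,
copies/embeddings, isomorphism, connectivity, concrete 3-graphs from the paper,
and (higher order) Turán-extremality.
-/

structure ThreeGraph where
  verts : Finset ℕ
  edges : Finset (Finset ℕ)
  sub : ∀ e ∈ edges, e ⊆ verts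
  card3 : ∀ e ∈ edges, e.card = 3

namespace ThreeGraph

/-- The 3-graph on vertex set `V` whose edges are the 3-element subsets of `V`
satisfying the predicate `p`. -/
noncomputable def mk3 (V : Finset ℕ) (p : Finset ℕ → Prop) : ThreeGraph :=
  letI := Classical.decPred p
  { verts := V
    edges := (V.powersetCard 3).filter p
    sub := fun e he => (Finset.mem_powersetCard.mp (Finset.mem_filter.mp he).1).1
    card3 := fun e he => (Finset.mem_powersetCard.mp (Finset.mem_filter.mp he).1).2 }

/-- `H` contains a copy of `F` (i.e. a subhypergraph of `H` is isomorphic to `F`);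
equivalently, `F` embeds into `H`. -/
def HasCopy (F H : ThreeGraph) : Prop :=
  ∃ f : ℕ → ℕ, Set.InjOn f ↑F.verts ∧ (∀ v ∈ F.verts, f v ∈ H.verts) ∧
    ∀ e ∈ F.edges, e.image f ∈ H.edges

/-- `F` and `H` are isomorphic 3-graphs. -/
def Iso (F H : ThreeGraph) : Prop :=
  ∃ f : ℕ → ℕ, Set.InjOn f ↑F.verts ∧ F.verts.image f = H.verts ∧
    F.edges.image (fun e => e.image f) = H.edges

def Adj (H : ThreeGraph) (u v : ℕ) : Prop :=
  ∃ e ∈ H.edges, u ∈ e ∧ v ∈ e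

/-- Connectivity: any two vertices are joined by a walk
(consecutive vertices share an edge). -/
def Connected (H : ThreeGraph) : Prop :=
  ∀ u ∈ H.verts, ∀ v ∈ H.verts, Relation.ReflTransGen H.Adj u v

/-- `P`: the loose 3-uniform path of length three. -/
noncomputable def pathP : ThreeGraph :=
  mk3 (Finset.range 7) (fun e => e = {0,1,2} ∨ e = {2,3,4} ∨ e = {4,5,6})

/-- `C`: the triangle. -/
noncomputable def triC : ThreeGraph :=
  mk3 (Finset.range 6) (fun e => e = {0,1,2} ∨ e = {2,3,4} ∨ e = {4,5,0})

/-- `M`: a pair of disjoint edges. -/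
noncomputable def matchM : ThreeGraph :=
  mk3 (Finset.range 6) (fun e => e = {0,1,2} ∨ e = {3,4,5})

/-- `P₂`: a pair of edges sharing exactly one vertex. -/
noncomputable def path2 : ThreeGraph :=
  mk3 (Finset.range 5) (fun e => e = {0,1,2} ∨ e = {2,3,4})

/-- `P₂ ∪ K₃`. -/
noncomputable def p2K3 : ThreeGraph :=
  mk3 (Finset.range 8) (fun e => e = {0,1,2} ∨ e = {2,3,4} ∨ e = {5,6,7})

/-- `K_m`: the complete 3-graph on `m` vertices. -/
noncomputable def K (m : ℕ) : ThreeGraph := mk3 (Finset.range m) (fun _ => True)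

/-- `S_n`: the full star on `n` vertices, with center `0`. -/
noncomputable def starS (n : ℕ) : ThreeGraph := mk3 (Finset.range n) (fun e => 0 ∈ e)

/-- The comet `Co(n)`: `K₄` on `{0,1,2,3}` and the full star with center `0`
on `{0} ∪ {4,…,n-1}`. -/
noncomputable def comet (n : ℕ) : ThreeGraph :=
  mk3 (Finset.range n)
    (fun e => e ⊆ ({0,1,2,3} : Finset ℕ) ∨ (0 ∈ e ∧ ∀ v ∈ e, v = 0 ∨ 4 ≤ v))

/-- `G₁(n)` with `x,y,z = 0,1,2` and `v = 3`. -/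
noncomputable def G1 (n : ℕ) : ThreeGraph :=
  mk3 (Finset.range n)
    (fun e => e = {0,1,2} ∨ (3 ∈ e ∧ (e ∩ ({0,1,2} : Finset ℕ)).Nonempty))

/-- `G₂(n)` with `x,y,z = 0,1,2`. -/
noncomputable def G2 (n : ℕ) : ThreeGraph :=
  mk3 (Finset.range n)
    (fun e => e = {0,1,2} ∨ (e ∩ ({0,1,2} : Finset ℕ)).card = 2)

/-- `G₃(n)` with `x = 0`, `y₁,y₂ = 1,2`, `z₁,z₂ = 3,4`. -/
noncomputable def G3 (n : ℕ) : ThreeGraph :=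
  mk3 (Finset.range n)
    (fun e => (e ⊆ ({0,1,2,3,4} : Finset ℕ) ∧ e ≠ {1,2,3} ∧ e ≠ {1,2,4}) ∨
      (∃ v ∈ e, 5 ≤ v ∧ (e = {0,3,v} ∨ e = {0,4,v})))

/-- `K₅⁺²`: `K₅` on `{0,…,4}` with `a,b = 0,1`, `c,d = 5,6`. -/
noncomputable def K5plus2 : ThreeGraph :=
  mk3 (Finset.range 7)
    (fun e => e ⊆ ({0,1,2,3,4} : Finset ℕ) ∨ e = {0,1,5} ∨ e = {0,1,6})

/-- The rocket `Ro(n)`: the full star with center `x = 0` on `{0} ∪ {5,…,n-1}`,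
plus vertices `a,b,c,d = 1,2,3,4` and edges `{x,a,b}, {a,b,c}, {a,b,d}`. -/
noncomputable def rocket (n : ℕ) : ThreeGraph :=
  mk3 (Finset.range n)
    (fun e => (0 ∈ e ∧ ∀ v ∈ e, v = 0 ∨ 5 ≤ v) ∨ e = {0,1,2} ∨ e = {1,2,3} ∨ e = {1,2,4})

/-- `K₆ ∪ K₁`. -/
noncomputable def K6K1 : ThreeGraph :=
  mk3 (Finset.range 7) (fun e => e ⊆ Finset.range 6)

/-- `K₆ ∪ K_{n-6}`. -/
noncomputable def K6K (n : ℕ) : ThreeGraph :=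
  mk3 (Finset.range n) (fun e => e ⊆ Finset.range 6 ∨ ∀ v ∈ e, 6 ≤ v)

/-- `K₆ ∪ S_{n-6}` (star centered at `6`). -/
noncomputable def K6star (n : ℕ) : ThreeGraph :=
  mk3 (Finset.range n) (fun e => e ⊆ Finset.range 6 ∨ (6 ∈ e ∧ ∀ v ∈ e, 6 ≤ v))

/-- `K₄ ∪ S_{n-4}` (star centered at `4`). -/
noncomputable def K4star (n : ℕ) : ThreeGraph :=
  mk3 (Finset.range n) (fun e => e ⊆ Finset.range 4 ∨ (4 ∈ e ∧ ∀ v ∈ e, 4 ≤ v))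

/-- `K₆ ∪ K₆ ∪ K₁` (on 13 vertices). -/
noncomputable def K6K6K1 : ThreeGraph :=
  mk3 (Finset.range 13) (fun e => e ⊆ Finset.range 6 ∨ e ⊆ Finset.Ico 6 12)

/-- `2K₆ ∪ 2K₁` (on 14 vertices). -/
noncomputable def twoK6twoK1 : ThreeGraph :=
  mk3 (Finset.range 14) (fun e => e ⊆ Finset.range 6 ∨ e ⊆ Finset.Ico 6 12)

/-- `K₅ ∪ K₅`. -/
noncomputable def K5K5 : ThreeGraph :=
  mk3 (Finset.range 10) (fun e => e ⊆ Finset.range 5 ∨ ∀ v ∈ e, 5 ≤ v)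

/-- `K₆ ∪ G₁(7)` (with `G₁(7)` on `{6,…,12}`, `x,y,z = 6,7,8`, `v = 9`). -/
noncomputable def K6G1 : ThreeGraph :=
  mk3 (Finset.range 13)
    (fun e => e ⊆ Finset.range 6 ∨ ((∀ v ∈ e, 6 ≤ v) ∧
      (e = {6,7,8} ∨ (9 ∈ e ∧ (e ∩ ({6,7,8} : Finset ℕ)).Nonempty))))

/-- `K₆ ∪ G₂(7)` (with `G₂(7)` on `{6,…,12}`, `x,y,z = 6,7,8`). -/
noncomputable def K6G2 : ThreeGraph :=
  mk3 (Finset.range 13)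
    (fun e => e ⊆ Finset.range 6 ∨ ((∀ v ∈ e, 6 ≤ v) ∧
      (e = {6,7,8} ∨ (e ∩ ({6,7,8} : Finset ℕ)).card = 2)))

/-- `H` is a member of `S` with the maximum number of edges. -/
def IsMaxIn (S : Set ThreeGraph) (H : ThreeGraph) : Prop :=
  H ∈ S ∧ ∀ G ∈ S, G.edges.card ≤ H.edges.card

/-- `cand 𝓕 n s` is the set of `n`-vertex `𝓕`-free 3-graphs not contained in any
`t`-extremal 3-graph for `t ≤ s`; so the `(s+1)`-st order Turán number of `𝓕` is the
maximal number of edges over `cand 𝓕 n s`, and the `(s+1)`-extremal 3-graphs are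
exactly those satisfying `IsMaxIn (cand 𝓕 n s)`. -/
def cand (𝓕 : Set ThreeGraph) (n : ℕ) : ℕ → Set ThreeGraph
  | 0 => {H | H.verts.card = n ∧ ∀ F ∈ 𝓕, ¬ HasCopy F H}
  | (s+1) => {H | H ∈ cand 𝓕 n s ∧ ∀ H', IsMaxIn (cand 𝓕 n s) H' → ¬ HasCopy H H'}

end ThreeGraph

namespace PfC

open ThreeGraph Finset

/-! ### Basic lemmas about `mk3` -/

lemma mk3_verts (V : Finset ℕ) (p : Finset ℕ → Prop) : (mk3 V p).verts = V := rfl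

lemma mem_mk3_edges {V : Finset ℕ} {p : Finset ℕ → Prop} {e : Finset ℕ} :
    e ∈ (mk3 V p).edges ↔ e ⊆ V ∧ e.card = 3 ∧ p e := by
  classical
  unfold mk3
  rw [Finset.mem_filter, Finset.mem_powersetCard]
  tauto

/-! ### Concrete finite objects -/

abbrev R6 : Finset ℕ := Finset.range 6
abbrev U20 : Finset (Finset ℕ) := R6.powersetCard 3
abbrev Tri3 : Finset (Finset ℕ) := {{0,1,2},{2,3,4},{4,5,0}}
abbrev Pi6 : Finset (Finset ℕ) := {{0,2},{2,4},{0,4},{0,3},{2,5},{1,4}}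
abbrev PiG2 : Finset (Finset ℕ) := {{0,2},{2,4},{0,4}}
abbrev Pist0 : Finset (Finset ℕ) := {{0,2},{0,4},{0,3}}
abbrev Pist2 : Finset (Finset ℕ) := {{0,2},{2,4},{2,5}}
abbrev Pist4 : Finset (Finset ℕ) := {{2,4},{0,4},{1,4}}

def comp6 (t : Finset ℕ) : Finset ℕ := R6 \ t

def exclCond (p t : Finset ℕ) : Prop :=
  (p ∩ t = ∅ ∧ ∃ r ∈ Tri3, (r ∩ p).card = 1 ∧ (r ∩ t).card = 1) ∨
  ((p ∩ t).card = 1 ∧ (p ∩ comp6 t).card = 1 ∧ comp6 t ∈ Tri3)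

instance (p : Finset ℕ) : DecidablePred (fun t => exclCond p t) := fun t => by
  unfold exclCond; infer_instance

def allowedL (L : Finset (Finset ℕ)) : Finset (Finset ℕ) :=
  U20.filter (fun t => ∀ p ∈ L, ¬ exclCond p t)

def PPL (L : Finset (Finset ℕ)) : Finset (Finset ℕ) :=
  (allowedL L).filter (fun t => comp6 t ∈ allowedL L ∧ 2 * t.sum id < 15 ∧
    ∃ p ∈ L, (p ∩ t).card = 1 ∧ (p ∩ comp6 t).card = 1)

def ETG2 : Finset (Finset ℕ) := U20.filter (fun t => 2 ≤ (t ∩ ({0,2,4} : Finset ℕ)).card)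
def ETst0 : Finset (Finset ℕ) :=
  U20.filter (fun t => t = {2,3,4} ∨ (0 ∈ t ∧ (t ∩ ({2,3,4} : Finset ℕ)).Nonempty))
def ETst2 : Finset (Finset ℕ) :=
  U20.filter (fun t => t = {0,4,5} ∨ (2 ∈ t ∧ (t ∩ ({0,4,5} : Finset ℕ)).Nonempty))
def ETst4 : Finset (Finset ℕ) :=
  U20.filter (fun t => t = {0,1,2} ∨ (4 ∈ t ∧ (t ∩ ({0,1,2} : Finset ℕ)).Nonempty))

/-! ### The finite facts, by `decide` -/

set_option maxRecDepth 40000 in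
lemma fact1 : ∀ L ∈ Pi6.powerset, L.Nonempty →
    (allowedL L).card + L.card ≤ 13 + (PPL L).card := by decide

set_option maxRecDepth 40000 in
lemma fact2 : ∀ L ∈ Pi6.powerset, L.Nonempty →
    (allowedL L).card + L.card = 13 + (PPL L).card →
    ((L = PiG2 ∧ allowedL L = ETG2) ∨ (L = Pist0 ∧ allowedL L = ETst0) ∨
     (L = Pist2 ∧ allowedL L = ETst2) ∨ (L = Pist4 ∧ allowedL L = ETst4)) ∧
    PPL L = ∅ ∧ (allowedL L).card = 10 := by decide

lemma fact_cross : ∀ p ∈ Pi6, ∀ q ∈ Pi6, p ∩ q = ∅ →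
    ∃ r ∈ Tri3, (r ∩ p).card = 1 ∧ (r ∩ q).card = 1 := by decide

set_option maxRecDepth 40000 in
lemma fact_pairwise_card : ∀ L ∈ Pi6.powerset,
    (∀ p ∈ L, ∀ q ∈ L, (p ∩ q).Nonempty) → L.card ≤ 3 := by decide

lemma fact_two_disj : ∀ p ∈ Pi6, ∀ q ∈ Pi6, ∀ p' ∈ Pi6, ∀ q' ∈ Pi6,
    p ∩ q = ∅ → p' ∩ q' = ∅ → (p ∩ p').Nonempty → (p ∩ q').Nonempty →
    (q ∩ p').Nonempty → (q ∩ q').Nonempty → False := by decide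

lemma fact_single : ∀ t ∈ R6, ∃ r1 ∈ Tri3, ∃ r2 ∈ Tri3,
    t ∈ r1 ∧ t ∉ r2 ∧ (r1 ∩ r2).card = 1 := by decide

lemma fact_pair_notPi : ∀ pr ∈ R6.powersetCard 2, pr ∉ Pi6 →
    ∃ r1 ∈ Tri3, ∃ r2 ∈ Tri3, (pr ∩ r1).card = 1 ∧ (r1 ∩ r2).card = 1 ∧ pr ∩ r2 = ∅ := by
  decide

lemma fact_pair_any : ∀ pr ∈ R6.powersetCard 2, ∃ r ∈ Tri3, (pr ∩ r).card = 1 := by decide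

lemma fact_mergeG2 : ∀ p ∈ Pi6, (∀ q ∈ PiG2, (p ∩ q).Nonempty) → p ∈ PiG2 := by decide
lemma fact_merge0 : ∀ p ∈ Pi6, (∀ q ∈ Pist0, (p ∩ q).Nonempty) → p ∈ Pist0 := by decide
lemma fact_merge2 : ∀ p ∈ Pi6, (∀ q ∈ Pist2, (p ∩ q).Nonempty) → p ∈ Pist2 := by decide
lemma fact_merge4 : ∀ p ∈ Pi6, (∀ q ∈ Pist4, (p ∩ q).Nonempty) → p ∈ Pist4 := by decide

lemma tri_sub_R6 : ∀ r ∈ Tri3, r ⊆ R6 := by decide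
lemma pi_sub_R6 : ∀ p ∈ Pi6, p ⊆ R6 := by decide
lemma pi_card2 : ∀ p ∈ Pi6, p.card = 2 := by decide

end PfC

namespace PfC
open ThreeGraph Finset

/-! ### Building a copy of the loose path from three edges -/

lemma mem_pathP_edges {e : Finset ℕ} :
    e ∈ pathP.edges ↔ e ⊆ Finset.range 7 ∧ e.card = 3 ∧
      (e = {0,1,2} ∨ e = {2,3,4} ∨ e = {4,5,6}) := mem_mk3_edges

lemma mem_triC_edges {e : Finset ℕ} :
    e ∈ triC.edges ↔ e ⊆ Finset.range 6 ∧ e.card = 3 ∧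
      (e = {0,1,2} ∨ e = {2,3,4} ∨ e = {4,5,0}) := mem_mk3_edges

lemma pathP_verts : pathP.verts = Finset.range 7 := rfl
lemma triC_verts : triC.verts = Finset.range 6 := rfl

lemma buildP {H : ThreeGraph} {e1 e2 e3 : Finset ℕ}
    (h1 : e1 ∈ H.edges) (h2 : e2 ∈ H.edges) (h3 : e3 ∈ H.edges)
    (c12 : (e1 ∩ e2).card = 1) (c23 : (e2 ∩ e3).card = 1) (c13 : e1 ∩ e3 = ∅) :
    HasCopy pathP H := by
  classical
  obtain ⟨u, hu⟩ := Finset.card_eq_one.mp c12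
  obtain ⟨w, hw⟩ := Finset.card_eq_one.mp c23
  have hmem12 : ∀ z, z ∈ e1 → z ∈ e2 → z = u := by
    intro z h1z h2z
    have : z ∈ e1 ∩ e2 := Finset.mem_inter.mpr ⟨h1z, h2z⟩
    rwa [hu, Finset.mem_singleton] at this
  have hmem23 : ∀ z, z ∈ e2 → z ∈ e3 → z = w := by
    intro z h1z h2z
    have : z ∈ e2 ∩ e3 := Finset.mem_inter.mpr ⟨h1z, h2z⟩
    rwa [hw, Finset.mem_singleton] at this
  have hmem13 : ∀ z, z ∈ e1 → z ∈ e3 → False := by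
    intro z h1z h2z
    have : z ∈ e1 ∩ e3 := Finset.mem_inter.mpr ⟨h1z, h2z⟩
    simp [c13] at this
  have hu1 : u ∈ e1 := by
    have : u ∈ e1 ∩ e2 := by rw [hu]; exact Finset.mem_singleton_self u
    exact (Finset.mem_inter.mp this).1
  have hu2 : u ∈ e2 := by
    have : u ∈ e1 ∩ e2 := by rw [hu]; exact Finset.mem_singleton_self u
    exact (Finset.mem_inter.mp this).2
  have hw2 : w ∈ e2 := by
    have : w ∈ e2 ∩ e3 := by rw [hw]; exact Finset.mem_singleton_self w
    exact (Finset.mem_inter.mp this).1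
  have hw3 : w ∈ e3 := by
    have : w ∈ e2 ∩ e3 := by rw [hw]; exact Finset.mem_singleton_self w
    exact (Finset.mem_inter.mp this).2
  have hu3 : u ∉ e3 := fun h => hmem13 u hu1 h
  have hw1 : w ∉ e1 := fun h => hmem13 w h hw3
  have huw : u ≠ w := fun h => hu3 (h ▸ hw3)
  -- decompose e1
  have hce1 : (e1.erase u).card = 2 := by
    rw [Finset.card_erase_of_mem hu1, H.card3 e1 h1]
  obtain ⟨p, q, hpq, hpqe⟩ := Finset.card_eq_two.mp hce1
  have hp1 : p ∈ e1 := Finset.mem_of_mem_erase (hpqe ▸ (by simp : p ∈ ({p,q} : Finset ℕ)))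
  have hq1 : q ∈ e1 := Finset.mem_of_mem_erase (hpqe ▸ (by simp : q ∈ ({p,q} : Finset ℕ)))
  have hpu : p ≠ u := Finset.ne_of_mem_erase (hpqe ▸ (by simp : p ∈ ({p,q} : Finset ℕ)))
  have hqu : q ≠ u := Finset.ne_of_mem_erase (hpqe ▸ (by simp : q ∈ ({p,q} : Finset ℕ)))
  have hp2 : p ∉ e2 := fun h => hpu (hmem12 p hp1 h)
  have hq2 : q ∉ e2 := fun h => hqu (hmem12 q hq1 h)
  have hp3 : p ∉ e3 := fun h => hmem13 p hp1 h
  have hq3 : q ∉ e3 := fun h => hmem13 q hq1 h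
  have he1 : e1 = {p, q, u} := by
    rw [← Finset.insert_erase hu1, hpqe]
    ext z; simp; tauto
  -- decompose e2
  have hwu : w ∈ e2.erase u := Finset.mem_erase.mpr ⟨fun h => huw h.symm, hw2⟩
  have hce2 : ((e2.erase u).erase w).card = 1 := by
    rw [Finset.card_erase_of_mem hwu, Finset.card_erase_of_mem hu2, H.card3 e2 h2]
  obtain ⟨s, hs⟩ := Finset.card_eq_one.mp hce2
  have hs' : s ∈ (e2.erase u).erase w := hs ▸ Finset.mem_singleton_self s
  have hs2 : s ∈ e2 := Finset.mem_of_mem_erase (Finset.mem_of_mem_erase hs')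
  have hsw : s ≠ w := (Finset.mem_erase.mp hs').1
  have hsu : s ≠ u := (Finset.mem_erase.mp (Finset.mem_of_mem_erase hs')).1
  have hs1 : s ∉ e1 := fun h => hsu (hmem12 s h hs2)
  have hs3 : s ∉ e3 := fun h => hsw (hmem23 s hs2 h)
  have he2 : e2 = {u, s, w} := by
    rw [← Finset.insert_erase hu2, ← Finset.insert_erase hwu, hs]
    ext z; simp; tauto
  -- decompose e3
  have hce3 : (e3.erase w).card = 2 := by
    rw [Finset.card_erase_of_mem hw3, H.card3 e3 h3]
  obtain ⟨t, v, htv, htve⟩ := Finset.card_eq_two.mp hce3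
  have ht3 : t ∈ e3 := Finset.mem_of_mem_erase (htve ▸ (by simp : t ∈ ({t,v} : Finset ℕ)))
  have hv3 : v ∈ e3 := Finset.mem_of_mem_erase (htve ▸ (by simp : v ∈ ({t,v} : Finset ℕ)))
  have htw : t ≠ w := Finset.ne_of_mem_erase (htve ▸ (by simp : t ∈ ({t,v} : Finset ℕ)))
  have hvw : v ≠ w := Finset.ne_of_mem_erase (htve ▸ (by simp : v ∈ ({t,v} : Finset ℕ)))
  have ht1 : t ∉ e1 := fun h => hmem13 t h ht3
  have hv1 : v ∉ e1 := fun h => hmem13 v h hv3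
  have ht2 : t ∉ e2 := fun h => htw (hmem23 t h ht3)
  have hv2 : v ∉ e2 := fun h => hvw (hmem23 v h hv3)
  have he3 : e3 = {w, t, v} := by
    rw [← Finset.insert_erase hw3, htve]
  -- pairwise inequalities
  have npq : p ≠ q := hpq
  have npu : p ≠ u := hpu
  have nps : p ≠ s := fun h => hs1 (h ▸ hp1)
  have npw : p ≠ w := fun h => hw1 (h ▸ hp1)
  have npt : p ≠ t := fun h => ht1 (h ▸ hp1)
  have npv : p ≠ v := fun h => hv1 (h ▸ hp1)
  have nqu : q ≠ u := hqu
  have nqs : q ≠ s := fun h => hs1 (h ▸ hq1)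
  have nqw : q ≠ w := fun h => hw1 (h ▸ hq1)
  have nqt : q ≠ t := fun h => ht1 (h ▸ hq1)
  have nqv : q ≠ v := fun h => hv1 (h ▸ hq1)
  have nus : u ≠ s := fun h => hsu h.symm
  have nuw : u ≠ w := huw
  have nut : u ≠ t := fun h => ht2 (h ▸ hu2)
  have nuv : u ≠ v := fun h => hv2 (h ▸ hu2)
  have nsw : s ≠ w := hsw
  have nst : s ≠ t := fun h => ht2 (h ▸ hs2)
  have nsv : s ≠ v := fun h => hv2 (h ▸ hs2)
  have nwt : w ≠ t := fun h => htw h.symm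
  have nwv : w ≠ v := fun h => hvw h.symm
  have ntv : t ≠ v := htv
  -- the embedding
  refine ⟨fun m => if m = 0 then p else if m = 1 then q else if m = 2 then u
    else if m = 3 then s else if m = 4 then w else if m = 5 then t else v, ?_, ?_, ?_⟩
  · rw [pathP_verts]
    intro a ha b hb hab
    simp only [Finset.coe_range, Set.mem_Iio] at ha hb
    interval_cases a <;> interval_cases b <;>
      first
        | rfl
        | (exact absurd hab npq)
        | (exact absurd hab.symm npq)
        | (exact absurd hab npu)
        | (exact absurd hab.symm npu)
        | (exact absurd hab nps)
        | (exact absurd hab.symm nps)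
        | (exact absurd hab npw)
        | (exact absurd hab.symm npw)
        | (exact absurd hab npt)
        | (exact absurd hab.symm npt)
        | (exact absurd hab npv)
        | (exact absurd hab.symm npv)
        | (exact absurd hab nqu)
        | (exact absurd hab.symm nqu)
        | (exact absurd hab nqs)
        | (exact absurd hab.symm nqs)
        | (exact absurd hab nqw)
        | (exact absurd hab.symm nqw)
        | (exact absurd hab nqt)
        | (exact absurd hab.symm nqt)
        | (exact absurd hab nqv)
        | (exact absurd hab.symm nqv)
        | (exact absurd hab nus)
        | (exact absurd hab.symm nus)
        | (exact absurd hab nuw)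
        | (exact absurd hab.symm nuw)
        | (exact absurd hab nut)
        | (exact absurd hab.symm nut)
        | (exact absurd hab nuv)
        | (exact absurd hab.symm nuv)
        | (exact absurd hab nsw)
        | (exact absurd hab.symm nsw)
        | (exact absurd hab nst)
        | (exact absurd hab.symm nst)
        | (exact absurd hab nsv)
        | (exact absurd hab.symm nsv)
        | (exact absurd hab nwt)
        | (exact absurd hab.symm nwt)
        | (exact absurd hab nwv)
        | (exact absurd hab.symm nwv)
        | (exact absurd hab ntv)
        | (exact absurd hab.symm ntv)
  · rw [pathP_verts]
    intro m hm
    rw [Finset.mem_range] at hm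
    interval_cases m
    · exact H.sub e1 h1 hp1
    · exact H.sub e1 h1 hq1
    · exact H.sub e1 h1 hu1
    · exact H.sub e2 h2 hs2
    · exact H.sub e2 h2 hw2
    · exact H.sub e3 h3 ht3
    · exact H.sub e3 h3 hv3
  · intro e he
    rw [mem_pathP_edges] at he
    obtain ⟨-, -, he | he | he⟩ := he <;> subst he
    · show Finset.image _ ({0,1,2} : Finset ℕ) ∈ H.edges
      simp only [Finset.image_insert, Finset.image_singleton]
      show ({p, q, u} : Finset ℕ) ∈ H.edges
      rw [← he1]; exact h1
    · show Finset.image _ ({2,3,4} : Finset ℕ) ∈ H.edges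
      simp only [Finset.image_insert, Finset.image_singleton]
      show ({u, s, w} : Finset ℕ) ∈ H.edges
      rw [← he2]; exact h2
    · show Finset.image _ ({4,5,6} : Finset ℕ) ∈ H.edges
      simp only [Finset.image_insert, Finset.image_singleton]
      show ({w, t, v} : Finset ℕ) ∈ H.edges
      rw [← he3]; exact h3

end PfC

namespace PfC
open ThreeGraph Finset

/-! ### Isomorphism machinery -/

lemma iso_trans {H K L : ThreeGraph} (h1 : Iso H K) (h2 : Iso K L) : Iso H L := by
  obtain ⟨f, finj, fv, fe⟩ := h1
  obtain ⟨g, ginj, gv, ge⟩ := h2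
  refine ⟨g ∘ f, ?_, ?_, ?_⟩
  · apply Set.InjOn.comp ginj finj
    intro a ha
    rw [← gv] at *
    rw [← fv]
    exact_mod_cast Finset.mem_image_of_mem f (by exact_mod_cast ha)
  · rw [← gv, ← fv, Finset.image_image]
  · rw [← ge, ← fe, Finset.image_image]
    apply Finset.image_congr
    intro e _
    simp [Finset.image_image]

lemma iso_symm {H K : ThreeGraph} (h : Iso H K) : Iso K H := by
  classical
  obtain ⟨f, finj, fv, fe⟩ := h
  set g := Function.invFunOn f ↑H.verts with hg
  have hleft : ∀ a ∈ H.verts, g (f a) = a := by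
    intro a ha
    exact finj.leftInvOn_invFunOn (by exact_mod_cast ha)
  have hsurj : ∀ b ∈ K.verts, g b ∈ H.verts ∧ f (g b) = b := by
    intro b hb
    rw [← fv, Finset.mem_image] at hb
    obtain ⟨a, ha, rfl⟩ := hb
    rw [hleft a ha]
    exact ⟨ha, rfl⟩
  refine ⟨g, ?_, ?_, ?_⟩
  · intro b1 hb1 b2 hb2 hgb
    have h1 := hsurj b1 (by exact_mod_cast hb1)
    have h2 := hsurj b2 (by exact_mod_cast hb2)
    rw [← h1.2, ← h2.2, hgb]
  · apply Finset.Subset.antisymm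
    · intro a ha
      rw [Finset.mem_image] at ha
      obtain ⟨b, hb, rfl⟩ := ha
      exact (hsurj b hb).1
    · intro a ha
      rw [Finset.mem_image]
      refine ⟨f a, ?_, hleft a ha⟩
      rw [← fv]
      exact Finset.mem_image_of_mem f ha
  · have key : ∀ e ∈ H.edges, (e.image f).image g = e := by
      intro e he
      rw [Finset.image_image]
      have : ∀ z ∈ e, (g ∘ f) z = id z := fun z hz => hleft z (H.sub e he hz)
      rw [Finset.image_congr this, Finset.image_id]
    rw [← fe, Finset.image_image]
    apply Finset.Subset.antisymm
    · intro e' he'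
      rw [Finset.mem_image] at he'
      obtain ⟨e, he, rfl⟩ := he'
      simpa [key e he] using he
    · intro e he
      rw [Finset.mem_image]
      exact ⟨e, he, key e he⟩

lemma iso_card_verts {H K : ThreeGraph} (h : Iso H K) : H.verts.card = K.verts.card := by
  obtain ⟨f, finj, fv, _⟩ := h
  rw [← fv, Finset.card_image_of_injOn finj]

lemma iso_card_edges {H K : ThreeGraph} (h : Iso H K) : H.edges.card = K.edges.card := by
  obtain ⟨f, finj, fv, fe⟩ := h
  rw [← fe]
  rw [Finset.card_image_of_injOn]
  intro e1 he1 e2 he2 hee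
  simp only at hee
  apply Finset.Subset.antisymm <;> intro z hz
  · have : f z ∈ e2.image f := hee ▸ Finset.mem_image_of_mem f hz
    rw [Finset.mem_image] at this
    obtain ⟨z', hz', hfz⟩ := this
    have : z' = z := finj (H.sub e2 (by exact_mod_cast he2) hz')
      (H.sub e1 (by exact_mod_cast he1) hz) hfz
    exact this ▸ hz'
  · have : f z ∈ e1.image f := hee ▸ Finset.mem_image_of_mem f hz
    rw [Finset.mem_image] at this
    obtain ⟨z', hz', hfz⟩ := this
    have : z' = z := finj (H.sub e1 (by exact_mod_cast he1) hz')
      (H.sub e2 (by exact_mod_cast he2) hz) hfz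
    exact this ▸ hz'

lemma hasCopy_of_iso {F H K : ThreeGraph} (hc : HasCopy F H) (hi : Iso H K) :
    HasCopy F K := by
  obtain ⟨f, finj, fv, fe⟩ := hc
  obtain ⟨g, ginj, gv, ge⟩ := hi
  refine ⟨g ∘ f, ?_, ?_, ?_⟩
  · apply Set.InjOn.comp ginj finj
    intro a ha
    exact_mod_cast fv a (by exact_mod_cast ha)
  · intro v hv
    rw [← gv]
    exact Finset.mem_image_of_mem g (fv v hv)
  · intro e he
    have : (e.image f).image g ∈ K.edges := by
      rw [← ge]
      exact Finset.mem_image_of_mem _ (fe e he)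
    rwa [Finset.image_image] at this

lemma connected_of_iso {H K : ThreeGraph} (hc : Connected H) (hi : Iso H K) :
    Connected K := by
  obtain ⟨f, finj, fv, fe⟩ := hi
  intro u hu v hv
  rw [← fv, Finset.mem_image] at hu hv
  obtain ⟨a, ha, rfl⟩ := hu
  obtain ⟨b, hb, rfl⟩ := hv
  refine Relation.ReflTransGen.lift f (fun x y hxy => ?_) _ _ (hc a ha b hb)
  obtain ⟨e, he, hxe, hye⟩ := hxy
  refine ⟨e.image f, ?_, Finset.mem_image_of_mem f hxe, Finset.mem_image_of_mem f hye⟩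
  rw [← fe]
  exact Finset.mem_image_of_mem _ he

/-- An isomorphism from a permutation with explicit inverse behaviour. -/
lemma iso_perm {H K : ThreeGraph} (σ : Equiv.Perm ℕ)
    (hv : H.verts.image σ = K.verts)
    (he : ∀ h ∈ H.edges, h.image σ ∈ K.edges)
    (he' : ∀ g ∈ K.edges, g.image σ.symm ∈ H.edges) : Iso H K := by
  refine ⟨σ, σ.injective.injOn, hv, ?_⟩
  apply Finset.Subset.antisymm
  · intro e' hee
    rw [Finset.mem_image] at hee
    obtain ⟨e, hee, rfl⟩ := hee
    exact he e hee
  · intro g hg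
    rw [Finset.mem_image]
    refine ⟨g.image σ.symm, he' g hg, ?_⟩
    simp [Finset.image_image]

/-- From a copy of the path we can extract two disjoint edges. -/
lemma disjoint_edges_of_pathP {H : ThreeGraph} (hc : HasCopy pathP H) :
    ∃ e1 ∈ H.edges, ∃ e2 ∈ H.edges, e1 ∩ e2 = ∅ := by
  obtain ⟨f, finj, fv, fe⟩ := hc
  have h1 : ({0,1,2} : Finset ℕ) ∈ pathP.edges := by
    rw [mem_pathP_edges]; refine ⟨by decide, by decide, by tauto⟩
  have h3 : ({4,5,6} : Finset ℕ) ∈ pathP.edges := by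
    rw [mem_pathP_edges]; refine ⟨by decide, by decide, by tauto⟩
  refine ⟨Finset.image f {0,1,2}, fe _ h1, Finset.image f {4,5,6}, fe _ h3, ?_⟩
  rw [Finset.eq_empty_iff_forall_notMem]
  intro z hz
  rw [Finset.mem_inter, Finset.mem_image, Finset.mem_image] at hz
  obtain ⟨⟨a, ha, rfl⟩, ⟨b, hb, hba⟩⟩ := hz
  simp only [Finset.mem_insert, Finset.mem_singleton] at ha hb
  have ha7 : a < 7 := by rcases ha with h|h|h <;> omega
  have hb7 : b < 7 := by rcases hb with h|h|h <;> omega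
  have hba' : b = a := by
    apply finj
    · rw [pathP_verts]; exact_mod_cast Finset.mem_range.mpr hb7
    · rw [pathP_verts]; exact_mod_cast Finset.mem_range.mpr ha7
    · exact hba
  subst hba'
  rcases ha with h|h|h <;> rcases hb with h'|h'|h' <;> omega

/-- From a copy of the triangle we can extract six distinct vertices forming the triangle. -/
lemma triangle_of_triC {H : ThreeGraph} (hc : HasCopy triC H) :
    ∃ f : ℕ → ℕ, (∀ i < 6, ∀ j < 6, f i = f j → i = j) ∧ (∀ i < 6, f i ∈ H.verts) ∧
      ({f 0, f 1, f 2} : Finset ℕ) ∈ H.edges ∧ ({f 2, f 3, f 4} : Finset ℕ) ∈ H.edges ∧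
      ({f 4, f 5, f 0} : Finset ℕ) ∈ H.edges := by
  obtain ⟨f, finj, fv, fe⟩ := hc
  have h1 : ({0,1,2} : Finset ℕ) ∈ triC.edges := by
    rw [mem_triC_edges]; refine ⟨by decide, by decide, by tauto⟩
  have h2 : ({2,3,4} : Finset ℕ) ∈ triC.edges := by
    rw [mem_triC_edges]; refine ⟨by decide, by decide, by tauto⟩
  have h3 : ({4,5,0} : Finset ℕ) ∈ triC.edges := by
    rw [mem_triC_edges]; refine ⟨by decide, by decide, by tauto⟩
  refine ⟨f, ?_, ?_, ?_, ?_, ?_⟩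
  · intro i hi j hj hij
    exact finj (by simpa [triC_verts] using hi) (by simpa [triC_verts] using hj) hij
  · intro i hi
    exact fv i (by simpa [triC_verts] using hi)
  · have := fe _ h1
    simpa only [Finset.image_insert, Finset.image_singleton] using this
  · have := fe _ h2
    simpa only [Finset.image_insert, Finset.image_singleton] using this
  · have := fe _ h3
    simpa only [Finset.image_insert, Finset.image_singleton] using this

end PfC

namespace PfC
open ThreeGraph Finset

/-! ### Normalization -/

lemma exists_enum (V : Finset ℕ) (n : ℕ) (hV : V.card = n) (v : ℕ → ℕ)
    (hv : ∀ i < 6, v i ∈ V) (hinj : ∀ i < 6, ∀ j < 6, v i = v j → i = j) :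
    ∃ φ : ℕ → ℕ, Set.InjOn φ ↑V ∧ V.image φ = Finset.range n ∧ ∀ i < 6, φ (v i) = i := by
  classical
  set V6 : Finset ℕ := (Finset.range 6).image v with hV6
  have hV6V : V6 ⊆ V := by
    intro z hz
    rw [hV6, Finset.mem_image] at hz
    obtain ⟨i, hi, rfl⟩ := hz
    exact hv i (Finset.mem_range.mp hi)
  have hV6card : V6.card = 6 := by
    rw [hV6, Finset.card_image_of_injOn, Finset.card_range]
    intro i hi j hj hij
    exact hinj i (by simpa using hi) j (by simpa using hj) hij
  have h6n : 6 ≤ n := hV ▸ hV6card ▸ Finset.card_le_card hV6V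
  set W : Finset ℕ := V \ V6 with hWdef
  have hWcard : W.card = n - 6 := by
    rw [hWdef, Finset.card_sdiff_of_subset hV6V, hV, hV6card]
  set ee := W.equivFin with hee
  set φ : ℕ → ℕ := fun w =>
    if hw : w ∈ W then 6 + (ee ⟨w, hw⟩ : ℕ)
    else if w = v 0 then 0 else if w = v 1 then 1 else if w = v 2 then 2
    else if w = v 3 then 3 else if w = v 4 then 4 else 5 with hφ
  have hviW : ∀ i < 6, v i ∉ W := by
    intro i hi
    rw [hWdef, Finset.mem_sdiff]
    push_neg
    intro _
    rw [hV6, Finset.mem_image]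
    exact ⟨i, Finset.mem_range.mpr hi, rfl⟩
  have hφv : ∀ i < 6, φ (v i) = i := by
    intro i hi
    rw [hφ]
    simp only [dif_neg (hviW i hi)]
    split_ifs with h0 h1 h2 h3 h4
    · exact (hinj i hi 0 (by omega) h0).symm
    · exact (hinj i hi 1 (by omega) h1).symm
    · exact (hinj i hi 2 (by omega) h2).symm
    · exact (hinj i hi 3 (by omega) h3).symm
    · exact (hinj i hi 4 (by omega) h4).symm
    · have n0 : i ≠ 0 := fun h => h0 (by rw [h])
      have n1 : i ≠ 1 := fun h => h1 (by rw [h])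
      have n2 : i ≠ 2 := fun h => h2 (by rw [h])
      have n3 : i ≠ 3 := fun h => h3 (by rw [h])
      have n4 : i ≠ 4 := fun h => h4 (by rw [h])
      omega
  have hsmall : ∀ a, a ∉ W → φ a < 6 := by
    intro a ha
    rw [hφ]
    simp only [dif_neg ha]
    split_ifs <;> omega
  have hmemv : ∀ a ∈ V, a ∉ W → ∃ i < 6, a = v i := by
    intro a haV haW
    have : a ∈ V6 := by
      rw [hWdef, Finset.mem_sdiff] at haW
      tauto
    rw [hV6, Finset.mem_image] at this
    obtain ⟨i, hi, rfl⟩ := this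
    exact ⟨i, Finset.mem_range.mp hi, rfl⟩
  have hinjOn : Set.InjOn φ ↑V := by
    intro a ha b hb hab
    by_cases haW : a ∈ W <;> by_cases hbW : b ∈ W
    · rw [hφ] at hab
      simp only [dif_pos haW, dif_pos hbW] at hab
      have : (ee ⟨a, haW⟩ : ℕ) = (ee ⟨b, hbW⟩ : ℕ) := by omega
      have h2 : ee ⟨a, haW⟩ = ee ⟨b, hbW⟩ := Fin.val_injective this
      have h3 := ee.injective h2
      exact congrArg Subtype.val h3
    · exfalso
      have h1 : 6 ≤ φ a := by rw [hφ]; simp only [dif_pos haW]; omega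
      have h2 := hsmall b hbW
      omega
    · exfalso
      have h1 : 6 ≤ φ b := by rw [hφ]; simp only [dif_pos hbW]; omega
      have h2 := hsmall a haW
      omega
    · obtain ⟨i, hi, rfl⟩ := hmemv a (by exact_mod_cast ha) haW
      obtain ⟨j, hj, rfl⟩ := hmemv b (by exact_mod_cast hb) hbW
      rw [hφv i hi, hφv j hj] at hab
      rw [hab]
  have hsub : V.image φ ⊆ Finset.range n := by
    intro z hz
    rw [Finset.mem_image] at hz
    obtain ⟨a, ha, rfl⟩ := hz
    rw [Finset.mem_range]
    by_cases haW : a ∈ W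
    · have h1 : φ a = 6 + (ee ⟨a, haW⟩ : ℕ) := by rw [hφ]; simp only [dif_pos haW]
      have h2 : (ee ⟨a, haW⟩ : ℕ) < W.card := (ee ⟨a, haW⟩).isLt
      omega
    · have := hsmall a haW
      omega
  refine ⟨φ, hinjOn, ?_, hφv⟩
  apply Finset.eq_of_subset_of_card_le hsub
  rw [Finset.card_range, Finset.card_image_of_injOn hinjOn, hV]

lemma normalize (H : ThreeGraph) {n : ℕ} (hcard : H.verts.card = n)
    (htri : HasCopy triC H) :
    ∃ K : ThreeGraph, Iso H K ∧ K.verts = Finset.range n ∧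
      ({0,1,2} : Finset ℕ) ∈ K.edges ∧ ({2,3,4} : Finset ℕ) ∈ K.edges ∧
      ({4,5,0} : Finset ℕ) ∈ K.edges := by
  classical
  obtain ⟨f, hfinj, hfv, hE1, hE2, hE3⟩ := triangle_of_triC htri
  obtain ⟨φ, hφinj, hφim, hφf⟩ := exists_enum H.verts n hcard f hfv hfinj
  refine ⟨⟨Finset.range n, H.edges.image (fun e => e.image φ), ?_, ?_⟩, ⟨φ, hφinj, hφim, rfl⟩,
    rfl, ?_, ?_, ?_⟩
  · intro e' he'
    rw [Finset.mem_image] at he'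
    obtain ⟨e, he, rfl⟩ := he'
    rw [← hφim]
    exact Finset.image_subset_image (H.sub e he)
  · intro e' he'
    rw [Finset.mem_image] at he'
    obtain ⟨e, he, rfl⟩ := he'
    rw [Finset.card_image_of_injOn (hφinj.mono (by exact_mod_cast H.sub e he))]
    exact H.card3 e he
  · have himg : Finset.image φ {f 0, f 1, f 2} = ({0,1,2} : Finset ℕ) := by
      simp only [Finset.image_insert, Finset.image_singleton,
        hφf 0 (by omega), hφf 1 (by omega), hφf 2 (by omega)]
    show ({0,1,2} : Finset ℕ) ∈ H.edges.image (fun e => e.image φ)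
    rw [← himg]
    exact Finset.mem_image_of_mem _ hE1
  · have himg : Finset.image φ {f 2, f 3, f 4} = ({2,3,4} : Finset ℕ) := by
      simp only [Finset.image_insert, Finset.image_singleton,
        hφf 2 (by omega), hφf 3 (by omega), hφf 4 (by omega)]
    show ({2,3,4} : Finset ℕ) ∈ H.edges.image (fun e => e.image φ)
    rw [← himg]
    exact Finset.mem_image_of_mem _ hE2
  · have himg : Finset.image φ {f 4, f 5, f 0} = ({4,5,0} : Finset ℕ) := by
      simp only [Finset.image_insert, Finset.image_singleton,
        hφf 4 (by omega), hφf 5 (by omega), hφf 0 (by omega)]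
    show ({4,5,0} : Finset ℕ) ∈ H.edges.image (fun e => e.image φ)
    rw [← himg]
    exact Finset.mem_image_of_mem _ hE3

end PfC

namespace PfC
open ThreeGraph Finset

/-! ### Classification of edges in a normalized graph -/

lemma inter_restrict {h r : Finset ℕ} (hr : r ⊆ R6) : h ∩ r = (h ∩ R6) ∩ r := by
  ext z
  simp only [Finset.mem_inter]
  exact ⟨fun ⟨a, b⟩ => ⟨⟨a, hr b⟩, b⟩, fun ⟨⟨a, _⟩, c⟩ => ⟨a, c⟩⟩

def ETH (K : ThreeGraph) : Finset (Finset ℕ) := K.edges.filter (fun h => h ⊆ R6)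

def DXf (K : ThreeGraph) (x : ℕ) : Finset (Finset ℕ) :=
  Pi6.filter (fun p => insert x p ∈ K.edges)

section Classify

variable {n : ℕ} {K : ThreeGraph}
variable (hn : 7 ≤ n) (hKv : K.verts = Finset.range n)
  (hA : ({0,1,2} : Finset ℕ) ∈ K.edges) (hB : ({2,3,4} : Finset ℕ) ∈ K.edges)
  (hC : ({4,5,0} : Finset ℕ) ∈ K.edges) (hP : ¬ HasCopy pathP K)

include hA hB hC in
lemma tri_mem : ∀ r ∈ Tri3, r ∈ K.edges := by
  intro r hr
  simp only [Finset.mem_insert, Finset.mem_singleton] at hr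
  rcases hr with rfl | rfl | rfl <;> assumption

include hA hB hC in
lemma edge_one {h : Finset ℕ} (hh : h ∈ K.edges) (h1 : (h ∩ R6).card = 1) :
    HasCopy pathP K := by
  obtain ⟨t, ht⟩ := Finset.card_eq_one.mp h1
  have hth : t ∈ h := (Finset.mem_inter.mp (ht ▸ Finset.mem_singleton_self t)).1
  have htR : t ∈ R6 := (Finset.mem_inter.mp (ht ▸ Finset.mem_singleton_self t)).2
  obtain ⟨r1, hr1, r2, hr2, htr1, htr2, hrr⟩ := fact_single t htR
  have hr1R := tri_sub_R6 r1 hr1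
  have hr2R := tri_sub_R6 r2 hr2
  apply buildP (tri_mem hA hB hC r2 hr2) (tri_mem hA hB hC r1 hr1) hh
  · rw [Finset.inter_comm]; exact hrr
  · rw [Finset.inter_comm, inter_restrict hr1R, ht, Finset.singleton_inter_of_mem htr1]
    rfl
  · rw [Finset.inter_comm, inter_restrict hr2R, ht, Finset.singleton_inter_of_notMem htr2]

include hA hB hC in
lemma edge_two {h : Finset ℕ} (hh : h ∈ K.edges) (h2 : (h ∩ R6).card = 2)
    (hnotpi : h ∩ R6 ∉ Pi6) : HasCopy pathP K := by
  have hpr : h ∩ R6 ∈ R6.powersetCard 2 :=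
    Finset.mem_powersetCard.mpr ⟨Finset.inter_subset_right, h2⟩
  obtain ⟨r1, hr1, r2, hr2, hc1, hc2, hc3⟩ := fact_pair_notPi _ hpr hnotpi
  have hr1R := tri_sub_R6 r1 hr1
  have hr2R := tri_sub_R6 r2 hr2
  apply buildP hh (tri_mem hA hB hC r1 hr1) (tri_mem hA hB hC r2 hr2)
  · rw [inter_restrict hr1R]; exact hc1
  · exact hc2
  · rw [inter_restrict hr2R]; exact hc3

include hA hB hC in
lemma edge_bridge {g m : Finset ℕ} (hg : g ∈ K.edges) (hm : m ∈ K.edges)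
    (hdisj : g ∩ R6 = ∅) (h2 : (m ∩ R6).card = 2) (hint : (g ∩ m).Nonempty) :
    HasCopy pathP K := by
  have hpr : m ∩ R6 ∈ R6.powersetCard 2 :=
    Finset.mem_powersetCard.mpr ⟨Finset.inter_subset_right, h2⟩
  obtain ⟨r, hr, hcr⟩ := fact_pair_any _ hpr
  have hrR := tri_sub_R6 r hr
  have hgR : ∀ z ∈ g, z ∉ R6 := by
    intro z hz hz6
    have : z ∈ g ∩ R6 := Finset.mem_inter.mpr ⟨hz, hz6⟩
    simp [hdisj] at this
  -- the fresh vertex of m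
  have hms : (m \ R6).card = 1 := by
    have := Finset.card_inter_add_card_sdiff m R6
    rw [h2, K.card3 m hm] at this
    omega
  obtain ⟨s, hs⟩ := Finset.card_eq_one.mp hms
  have hgm : g ∩ m = {s} := by
    ext z
    simp only [Finset.mem_inter, Finset.mem_singleton]
    constructor
    · rintro ⟨hz1, hz2⟩
      have : z ∈ m \ R6 := Finset.mem_sdiff.mpr ⟨hz2, hgR z hz1⟩
      rwa [hs, Finset.mem_singleton] at this
    · rintro rfl
      obtain ⟨z, hz⟩ := hint
      have hz1 := (Finset.mem_inter.mp hz).1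
      have hz2 := (Finset.mem_inter.mp hz).2
      have : z ∈ m \ R6 := Finset.mem_sdiff.mpr ⟨hz2, hgR z hz1⟩
      rw [hs, Finset.mem_singleton] at this
      exact this ▸ ⟨hz1, hz2⟩
  apply buildP hg hm (tri_mem hA hB hC r hr)
  · rw [hgm]; rfl
  · rw [inter_restrict hrR]; exact hcr
  · ext z
    simp only [Finset.mem_inter, Finset.notMem_empty, iff_false, not_and]
    intro hz1 hz2
    exact hgR z hz1 (hrR hz2)

include hn hKv hA hB hC hP in
lemma no_outside (hconn : Connected K) : ∀ g ∈ K.edges, (g ∩ R6).Nonempty := by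
  intro g hg
  by_contra hcon
  rw [Finset.not_nonempty_iff_eq_empty] at hcon
  have hgne : g.Nonempty := Finset.card_pos.mp (by rw [K.card3 g hg]; omega)
  obtain ⟨u, hu⟩ := hgne
  have hu0 : Relation.ReflTransGen K.Adj u 0 := by
    apply hconn u (K.sub g hg hu) 0
    rw [hKv, Finset.mem_range]; omega
  have main : ∀ a, Relation.ReflTransGen K.Adj a 0 →
      (∃ g' ∈ K.edges, a ∈ g' ∧ g' ∩ R6 = ∅) → False := by
    intro a h
    induction h using Relation.ReflTransGen.head_induction_on with
    | refl =>
      rintro ⟨g', hg', h0, hdisj⟩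
      have : (0:ℕ) ∈ g' ∩ R6 := Finset.mem_inter.mpr ⟨h0, by decide⟩
      simp [hdisj] at this
    | @head a' c' hadj hrest ih =>
      rintro ⟨g', hg', hag', hdisj⟩
      obtain ⟨m, hm, ham, hcm⟩ := hadj
      by_cases hmR : m ∩ R6 = ∅
      · exact ih ⟨m, hm, hcm, hmR⟩
      · have hle : (m ∩ R6).card ≤ 3 :=
          le_trans (Finset.card_le_card Finset.inter_subset_left) (le_of_eq (K.card3 m hm))
        have hpos : 0 < (m ∩ R6).card :=
          Finset.card_pos.mpr (Finset.nonempty_iff_ne_empty.mpr hmR)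
        have h123 : (m ∩ R6).card = 1 ∨ (m ∩ R6).card = 2 ∨ (m ∩ R6).card = 3 := by omega
        rcases h123 with h1 | h2 | h3
        · exact hP (edge_one hA hB hC hm h1)
        · exact hP (edge_bridge hA hB hC hg' hm hdisj h2 ⟨a', Finset.mem_inter.mpr ⟨hag', ham⟩⟩)
        · have : m ∩ R6 = m := Finset.eq_of_subset_of_card_le Finset.inter_subset_left
            (by rw [K.card3 m hm]; omega)
          have hmR6 : m ⊆ R6 := by rw [← this]; exact Finset.inter_subset_right
          have : a' ∈ g' ∩ R6 := Finset.mem_inter.mpr ⟨hag', hmR6 ham⟩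
          simp [hdisj] at this
  exact main u hu0 ⟨g, hg, hu, hcon⟩

include hn hKv hA hB hC hP in
lemma classify (hconn : Connected K) :
    ∀ h ∈ K.edges, h ⊆ R6 ∨ ∃ x ∈ Finset.Ico 6 n, ∃ p ∈ Pi6, h = insert x p := by
  intro h hh
  have hno := no_outside hn hKv hA hB hC hP hconn h hh
  have hle : (h ∩ R6).card ≤ 3 :=
    le_trans (Finset.card_le_card Finset.inter_subset_left) (le_of_eq (K.card3 h hh))
  have hpos : 0 < (h ∩ R6).card := Finset.card_pos.mpr hno
  have h123 : (h ∩ R6).card = 1 ∨ (h ∩ R6).card = 2 ∨ (h ∩ R6).card = 3 := by omega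
  rcases h123 with h1 | h2 | h3
  · exact absurd (edge_one hA hB hC hh h1) hP
  · by_cases hpi : h ∩ R6 ∈ Pi6
    · right
      have hxs : (h \ R6).card = 1 := by
        have := Finset.card_inter_add_card_sdiff h R6
        rw [h2, K.card3 h hh] at this
        omega
      obtain ⟨x, hx⟩ := Finset.card_eq_one.mp hxs
      have hxh : x ∈ h := (Finset.mem_sdiff.mp (hx ▸ Finset.mem_singleton_self x)).1
      have hxR : x ∉ R6 := (Finset.mem_sdiff.mp (hx ▸ Finset.mem_singleton_self x)).2
      have hxn : x < n := by
        have := K.sub h hh hxh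
        rwa [hKv, Finset.mem_range] at this
      refine ⟨x, Finset.mem_Ico.mpr ⟨by simpa using hxR, hxn⟩, h ∩ R6, hpi, ?_⟩
      ext z
      simp only [Finset.mem_insert, Finset.mem_inter]
      constructor
      · intro hz
        by_cases hz6 : z ∈ R6
        · exact Or.inr ⟨hz, hz6⟩
        · left
          have : z ∈ h \ R6 := Finset.mem_sdiff.mpr ⟨hz, hz6⟩
          rwa [hx, Finset.mem_singleton] at this
      · rintro (rfl | ⟨hz, _⟩) <;> [exact hxh; exact hz]
    · exact absurd (edge_two hA hB hC hh h2 hpi) hP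
  · left
    have : h ∩ R6 = h := Finset.eq_of_subset_of_card_le Finset.inter_subset_left
      (by rw [K.card3 h hh]; omega)
    rw [← this]
    exact Finset.inter_subset_right

end Classify
end PfC

namespace PfC
open ThreeGraph Finset

section Decomp

variable {n : ℕ} {K : ThreeGraph}
variable (hn : 7 ≤ n) (hKv : K.verts = Finset.range n)
  (hA : ({0,1,2} : Finset ℕ) ∈ K.edges) (hB : ({2,3,4} : Finset ℕ) ∈ K.edges)
  (hC : ({4,5,0} : Finset ℕ) ∈ K.edges) (hP : ¬ HasCopy pathP K) (hconn : Connected K)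

include hn hKv hA hB hC hP hconn in
lemma edges_split :
    K.edges.filter (fun h => ¬ h ⊆ R6) =
      (Finset.Ico 6 n).biUnion (fun x => (DXf K x).image (insert x)) := by
  ext h
  simp only [Finset.mem_filter, Finset.mem_biUnion, Finset.mem_image]
  constructor
  · rintro ⟨hh, hnot⟩
    rcases classify hn hKv hA hB hC hP hconn h hh with h6 | ⟨x, hx, p, hp, rfl⟩
    · exact absurd h6 hnot
    · exact ⟨x, hx, p, Finset.mem_filter.mpr ⟨hp, hh⟩, rfl⟩
  · rintro ⟨x, hx, p, hp, rfl⟩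
    have hp' := Finset.mem_filter.mp hp
    refine ⟨hp'.2, fun hsub => ?_⟩
    have hx6 : x ∈ R6 := hsub (Finset.mem_insert_self x p)
    rw [Finset.mem_Ico] at hx
    rw [Finset.mem_range] at hx6
    omega

include hn hKv hA hB hC hP hconn in
lemma count_decomp :
    K.edges.card = (ETH K).card + ∑ x ∈ Finset.Ico 6 n, (DXf K x).card := by
  classical
  have hsplit := Finset.card_filter_add_card_filter_not
    (s := K.edges) (p := fun h => h ⊆ R6)
  rw [edges_split hn hKv hA hB hC hP hconn] at hsplit
  have hcardbi : ((Finset.Ico 6 n).biUnion (fun x => (DXf K x).image (insert x))).card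
      = ∑ x ∈ Finset.Ico 6 n, (DXf K x).card := by
    rw [Finset.card_biUnion]
    · apply Finset.sum_congr rfl
      intro x hx
      rw [Finset.mem_Ico] at hx
      apply Finset.card_image_of_injOn
      intro p1 hp1 p2 hp2 hins
      have hx1 : x ∉ p1 := fun hc => by
        have := pi_sub_R6 p1 (Finset.mem_filter.mp hp1).1 hc
        rw [Finset.mem_range] at this; omega
      have hx2 : x ∉ p2 := fun hc => by
        have := pi_sub_R6 p2 (Finset.mem_filter.mp hp2).1 hc
        rw [Finset.mem_range] at this; omega
      rw [← Finset.erase_insert hx1, ← Finset.erase_insert hx2, hins]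
    · intro x hx y hy hxy
      rw [Finset.mem_coe, Finset.mem_Ico] at hx hy
      rw [Function.onFun, Finset.disjoint_left]
      rintro h hhx hhy
      rw [Finset.mem_image] at hhx hhy
      obtain ⟨p, hp, rfl⟩ := hhx
      obtain ⟨q, hq, hins⟩ := hhy
      have hyp : y ∈ insert x p := by rw [← hins]; exact Finset.mem_insert_self y q
      rcases Finset.mem_insert.mp hyp with rfl | hyp'
      · exact hxy rfl
      · have := pi_sub_R6 p (Finset.mem_filter.mp hp).1 hyp'
        rw [Finset.mem_range] at this; omega
  rw [hcardbi] at hsplit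
  unfold ETH
  omega

include hn hKv hA hB hC hP hconn in
lemma DX_nonempty : ∀ x ∈ Finset.Ico 6 n, (DXf K x).Nonempty := by
  intro x hx
  have hx' := Finset.mem_Ico.mp hx
  have hxv : x ∈ K.verts := by rw [hKv, Finset.mem_range]; omega
  have h0v : (0:ℕ) ∈ K.verts := by rw [hKv, Finset.mem_range]; omega
  have hwalk := hconn x hxv 0 h0v
  rcases Relation.ReflTransGen.cases_head hwalk with heq | ⟨c, hadj, _⟩
  · omega
  · obtain ⟨m, hm, hxm, _⟩ := hadj
    rcases classify hn hKv hA hB hC hP hconn m hm with h6 | ⟨y, hy, p, hp, rfl⟩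
    · have := h6 hxm
      rw [Finset.mem_range] at this; omega
    · rcases Finset.mem_insert.mp hxm with rfl | hxp
      · exact ⟨p, Finset.mem_filter.mpr ⟨hp, hm⟩⟩
      · have := pi_sub_R6 p hp hxp
        rw [Finset.mem_range] at this; omega

include hA hB hC hP in
lemma condI : ∀ p, (∃ x ∈ Finset.Ico 6 n, p ∈ DXf K x) → ∀ t ∈ ETH K, ¬ exclCond p t := by
  rintro p ⟨x, hx, hpx⟩ t ht hexcl
  have hpPi : p ∈ Pi6 := (Finset.mem_filter.mp hpx).1
  have hxe : insert x p ∈ K.edges := (Finset.mem_filter.mp hpx).2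
  have hte : t ∈ K.edges := (Finset.mem_filter.mp ht).1
  have htR : t ⊆ R6 := (Finset.mem_filter.mp ht).2
  have hx6 : 6 ≤ x := (Finset.mem_Ico.mp hx).1
  have hxnot : ∀ s : Finset ℕ, s ⊆ R6 → x ∉ s := by
    intro s hs hc
    have := hs hc
    rw [Finset.mem_range] at this; omega
  rcases hexcl with ⟨hdisj, r, hr, hr1, hr2⟩ | ⟨h1, h2, hcomp⟩
  · have hrR := tri_sub_R6 r hr
    apply hP
    apply buildP hxe (tri_mem hA hB hC r hr) hte
    · rw [Finset.insert_inter_of_notMem (hxnot r hrR), Finset.inter_comm]; exact hr1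
    · exact hr2
    · rw [Finset.insert_inter_of_notMem (hxnot t htR)]; exact hdisj
  · have hcompR : comp6 t ⊆ R6 := Finset.sdiff_subset
    apply hP
    apply buildP hte hxe (tri_mem hA hB hC _ hcomp)
    · rw [Finset.inter_comm, Finset.insert_inter_of_notMem (hxnot t htR), Finset.inter_comm,
        Finset.inter_comm t p]
      exact h1
    · rw [Finset.insert_inter_of_notMem (hxnot _ hcompR)]; exact h2
    · exact Finset.inter_sdiff_self t R6

include hP in
lemma condII : ∀ p, (∃ x ∈ Finset.Ico 6 n, p ∈ DXf K x) → ∀ t ∈ ETH K, comp6 t ∈ ETH K →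
    ¬((p ∩ t).card = 1 ∧ (p ∩ comp6 t).card = 1) := by
  rintro p ⟨x, hx, hpx⟩ t ht hct ⟨h1, h2⟩
  have hxe : insert x p ∈ K.edges := (Finset.mem_filter.mp hpx).2
  have hte : t ∈ K.edges := (Finset.mem_filter.mp ht).1
  have htR : t ⊆ R6 := (Finset.mem_filter.mp ht).2
  have hcte : comp6 t ∈ K.edges := (Finset.mem_filter.mp hct).1
  have hctR : comp6 t ⊆ R6 := Finset.sdiff_subset
  have hx6 : 6 ≤ x := (Finset.mem_Ico.mp hx).1
  have hxnot : ∀ s : Finset ℕ, s ⊆ R6 → x ∉ s := by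
    intro s hs hc
    have := hs hc
    rw [Finset.mem_range] at this; omega
  apply hP
  apply buildP hte hxe hcte
  · rw [Finset.inter_comm, Finset.insert_inter_of_notMem (hxnot t htR), Finset.inter_comm,
      Finset.inter_comm t p]
    exact h1
  · rw [Finset.insert_inter_of_notMem (hxnot _ hctR)]; exact h2
  · exact Finset.inter_sdiff_self t R6

include hA hB hC hP in
lemma condIII : ∀ x ∈ Finset.Ico 6 n, ∀ y ∈ Finset.Ico 6 n, x ≠ y →
    ∀ p ∈ DXf K x, ∀ q ∈ DXf K y, (p ∩ q).Nonempty := by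
  intro x hx y hy hxy p hp q hq
  by_contra hcon
  rw [Finset.not_nonempty_iff_eq_empty] at hcon
  have hpPi : p ∈ Pi6 := (Finset.mem_filter.mp hp).1
  have hqPi : q ∈ Pi6 := (Finset.mem_filter.mp hq).1
  have hxe : insert x p ∈ K.edges := (Finset.mem_filter.mp hp).2
  have hye : insert y q ∈ K.edges := (Finset.mem_filter.mp hq).2
  have hx6 : 6 ≤ x := (Finset.mem_Ico.mp hx).1
  have hy6 : 6 ≤ y := (Finset.mem_Ico.mp hy).1
  have hpR := pi_sub_R6 p hpPi
  have hqR := pi_sub_R6 q hqPi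
  obtain ⟨r, hr, hr1, hr2⟩ := fact_cross p hpPi q hqPi hcon
  have hrR := tri_sub_R6 r hr
  have hnotR : ∀ (z : ℕ), 6 ≤ z → ∀ s : Finset ℕ, s ⊆ R6 → z ∉ s := by
    intro z hz s hs hc
    have := hs hc
    rw [Finset.mem_range] at this; omega
  apply hP
  apply buildP hxe (tri_mem hA hB hC r hr) hye
  · rw [Finset.insert_inter_of_notMem (hnotR x hx6 r hrR), Finset.inter_comm]; exact hr1
  · rw [Finset.inter_comm, Finset.insert_inter_of_notMem (hnotR y hy6 r hrR),
      Finset.inter_comm]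
    exact hr2
  · ext z
    simp only [Finset.mem_inter, Finset.mem_insert, Finset.notMem_empty, iff_false, not_and]
    rintro (rfl | hzp) (h | hzq)
    · exact hxy h
    · exact hnotR z hx6 q hqR hzq
    · subst h; exact hnotR z hy6 p hpR hzp
    · have : z ∈ p ∩ q := Finset.mem_inter.mpr ⟨hzp, hzq⟩
      simp [hcon] at this

end Decomp
end PfC

namespace PfC
open ThreeGraph Finset

/-! ### The core counting theorem -/

lemma block_bound {ET A P : Finset (Finset ℕ)} (hsub : ET ⊆ A)
    (hPA : P ⊆ A) (hPco : ∀ t ∈ P, comp6 t ∈ A) (hPord : ∀ t ∈ P, 2 * t.sum id < 15)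
    (hsub6 : ∀ t ∈ A, t ⊆ R6)
    (hblock : ∀ t ∈ P, t ∈ ET → comp6 t ∉ ET) :
    ET.card + P.card ≤ A.card := by
  classical
  have hsum15 : ∀ t ∈ A, t.sum id + (comp6 t).sum id = 15 := by
    intro t ht
    have h1 : (R6 \ t).sum id + t.sum id = R6.sum id :=
      Finset.sum_sdiff (f := id) (hsub6 t ht)
    have h2 : R6.sum id = 15 := by decide
    unfold comp6
    omega
  have hmaps : ∀ t ∈ P, (if t ∈ ET then comp6 t else t) ∈ A \ ET := by
    intro t ht
    by_cases hte : t ∈ ET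
    · rw [if_pos hte]
      exact Finset.mem_sdiff.mpr ⟨hPco t ht, hblock t ht hte⟩
    · rw [if_neg hte]
      exact Finset.mem_sdiff.mpr ⟨hPA ht, hte⟩
  have hinj : ∀ t1 ∈ P, ∀ t2 ∈ P,
      (if t1 ∈ ET then comp6 t1 else t1) = (if t2 ∈ ET then comp6 t2 else t2) → t1 = t2 := by
    intro t1 ht1 t2 ht2 heq
    by_cases h1 : t1 ∈ ET <;> by_cases h2 : t2 ∈ ET
    · rw [if_pos h1, if_pos h2] at heq
      have e1 : R6 \ comp6 t1 = t1 := Finset.sdiff_sdiff_eq_self (hsub6 t1 (hPA ht1))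
      have e2 : R6 \ comp6 t2 = t2 := Finset.sdiff_sdiff_eq_self (hsub6 t2 (hPA ht2))
      rw [← e1, ← e2, heq]
    · rw [if_pos h1, if_neg h2] at heq
      exfalso
      have o1 := hPord t1 ht1
      have o2 := hPord t2 ht2
      have s1 := hsum15 t1 (hPA ht1)
      rw [heq] at s1
      omega
    · rw [if_neg h1, if_pos h2] at heq
      exfalso
      have o1 := hPord t1 ht1
      have o2 := hPord t2 ht2
      have s2 := hsum15 t2 (hPA ht2)
      rw [← heq] at s2
      omega
    · rwa [if_neg h1, if_neg h2] at heq
  have hcard : P.card ≤ (A \ ET).card :=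
    Finset.card_le_card_of_injOn _ hmaps hinj
  have h1 := Finset.card_sdiff_of_subset hsub
  have h2 := Finset.card_le_card hsub
  omega

theorem core : ∀ (W : Finset ℕ), W.Nonempty →
    ∀ (ET : Finset (Finset ℕ)) (D : ℕ → Finset (Finset ℕ)),
    ET ⊆ U20 → (∀ x ∈ W, D x ⊆ Pi6) → (∀ x ∈ W, (D x).Nonempty) →
    (∀ p, (∃ x ∈ W, p ∈ D x) → ∀ t ∈ ET, ¬ exclCond p t) →
    (∀ p, (∃ x ∈ W, p ∈ D x) → ∀ t ∈ ET, comp6 t ∈ ET →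
      ¬((p ∩ t).card = 1 ∧ (p ∩ comp6 t).card = 1)) →
    (∀ x ∈ W, ∀ y ∈ W, x ≠ y → ∀ p ∈ D x, ∀ q ∈ D y, (p ∩ q).Nonempty) →
    (ET.card + ∑ x ∈ W, (D x).card ≤ 3 * W.card + 10 ∧
      (ET.card + ∑ x ∈ W, (D x).card = 3 * W.card + 10 →
        ((ET = ETG2 ∧ ∀ x ∈ W, D x = PiG2) ∨ (ET = ETst0 ∧ ∀ x ∈ W, D x = Pist0) ∨
         (ET = ETst2 ∧ ∀ x ∈ W, D x = Pist2) ∨ (ET = ETst4 ∧ ∀ x ∈ W, D x = Pist4)))) := by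
  classical
  intro W
  induction W using Finset.strongInduction with
  | _ W IH =>
    intro hWne ET D hET hD hDne hI hII hIII
    by_cases hone : W.card = 1
    · -- base case: one fresh vertex
      obtain ⟨x, rfl⟩ := Finset.card_eq_one.mp hone
      have hxx : x ∈ ({x} : Finset ℕ) := Finset.mem_singleton_self x
      set L := D x with hL
      have hLPi : L ⊆ Pi6 := hD x hxx
      have hLne : L.Nonempty := hDne x hxx
      have hsubAl : ET ⊆ allowedL L := by
        intro t ht
        rw [allowedL, Finset.mem_filter]
        exact ⟨hET ht, fun p hp hexcl => hI p ⟨x, hxx, hp⟩ t ht hexcl⟩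
      have hblock : ∀ t ∈ PPL L, t ∈ ET → comp6 t ∉ ET := by
        intro t htP htE hctE
        rw [PPL, Finset.mem_filter] at htP
        obtain ⟨htA, hcA, hord, p, hp, h1, h2⟩ := htP
        exact hII p ⟨x, hxx, hp⟩ t htE hctE ⟨h1, h2⟩
      have hPA : PPL L ⊆ allowedL L := Finset.filter_subset _ _
      have hPco : ∀ t ∈ PPL L, comp6 t ∈ allowedL L := fun t ht =>
        (Finset.mem_filter.mp ht).2.1
      have hPord : ∀ t ∈ PPL L, 2 * t.sum id < 15 := fun t ht =>
        (Finset.mem_filter.mp ht).2.2.1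
      have hsub6 : ∀ t ∈ allowedL L, t ⊆ R6 := fun t ht =>
        (Finset.mem_powersetCard.mp (Finset.mem_filter.mp ht).1).1
      have hb := block_bound hsubAl hPA hPco hPord hsub6 hblock
      have hf1 := fact1 L (Finset.mem_powerset.mpr hLPi) hLne
      have hsum : ∑ z ∈ ({x} : Finset ℕ), (D z).card = L.card := by
        rw [Finset.sum_singleton]
      constructor
      · rw [hsum, Finset.card_singleton]; omega
      · intro heq
        rw [hsum, Finset.card_singleton] at heq
        have heq13 : ET.card + L.card = 13 := by omega
        have hf2cond : (allowedL L).card + L.card = 13 + (PPL L).card := by omega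
        obtain ⟨hcase, hPP0, hAl10⟩ := fact2 L (Finset.mem_powerset.mpr hLPi) hLne hf2cond
        have hPP0c : (PPL L).card = 0 := by rw [hPP0]; rfl
        have hETeq : ET = allowedL L :=
          Finset.eq_of_subset_of_card_le hsubAl (by omega)
        rcases hcase with ⟨hL', hAl'⟩ | ⟨hL', hAl'⟩ | ⟨hL', hAl'⟩ | ⟨hL', hAl'⟩
        · refine Or.inl ⟨hETeq.trans hAl', fun z hz => ?_⟩
          rw [Finset.mem_singleton] at hz; subst hz
          rw [← hL, hL']
        · refine Or.inr (Or.inl ⟨hETeq.trans hAl', fun z hz => ?_⟩)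
          rw [Finset.mem_singleton] at hz; subst hz
          rw [← hL, hL']
        · refine Or.inr (Or.inr (Or.inl ⟨hETeq.trans hAl', fun z hz => ?_⟩))
          rw [Finset.mem_singleton] at hz; subst hz
          rw [← hL, hL']
        · refine Or.inr (Or.inr (Or.inr ⟨hETeq.trans hAl', fun z hz => ?_⟩))
          rw [Finset.mem_singleton] at hz; subst hz
          rw [← hL, hL']
    · -- inductive step
      have hcard2 : 2 ≤ W.card := by
        have := Finset.card_pos.mpr hWne
        omega
      have hxex : ∃ x ∈ W, ∀ p ∈ D x, ∀ q ∈ D x, (p ∩ q).Nonempty := by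
        by_contra hno
        push_neg at hno
        obtain ⟨a, ha, b, hb, hab⟩ := Finset.one_lt_card.mp hcard2
        obtain ⟨p, hp, q, hq, hpq⟩ := hno a ha
        obtain ⟨p', hp', q', hq', hpq'⟩ := hno b hb
        exact fact_two_disj p (hD a ha hp) q (hD a ha hq) p' (hD b hb hp') q' (hD b hb hq')
          hpq hpq' (hIII a ha b hb hab p hp p' hp') (hIII a ha b hb hab p hp q' hq')
          (hIII a ha b hb hab q hq p' hp') (hIII a ha b hb hab q hq q' hq')
      obtain ⟨x, hxW, hxpair⟩ := hxex
      have hDx3 : (D x).card ≤ 3 :=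
        fact_pairwise_card (D x) (Finset.mem_powerset.mpr (hD x hxW)) hxpair
      have hW'ne : (W.erase x).Nonempty := by
        rw [← Finset.card_pos, Finset.card_erase_of_mem hxW]
        omega
      have IH' := IH (W.erase x) (Finset.erase_ssubset hxW) hW'ne ET D hET
        (fun z hz => hD z (Finset.mem_of_mem_erase hz))
        (fun z hz => hDne z (Finset.mem_of_mem_erase hz))
        (fun p hp => hI p (by
          obtain ⟨z, hz, hzp⟩ := hp
          exact ⟨z, Finset.mem_of_mem_erase hz, hzp⟩))
        (fun p hp => hII p (by
          obtain ⟨z, hz, hzp⟩ := hp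
          exact ⟨z, Finset.mem_of_mem_erase hz, hzp⟩))
        (fun a ha b hb hab => hIII a (Finset.mem_of_mem_erase ha) b
          (Finset.mem_of_mem_erase hb) hab)
      have hsum : ∑ z ∈ W, (D z).card = ∑ z ∈ W.erase x, (D z).card + (D x).card :=
        (Finset.sum_erase_add W _ hxW).symm
      have hcardW' : (W.erase x).card = W.card - 1 := Finset.card_erase_of_mem hxW
      have hbd := IH'.1
      constructor
      · omega
      · intro heq
        have heq' : ET.card + ∑ z ∈ W.erase x, (D z).card = 3 * (W.erase x).card + 10 := by
          omega
        have hDx3' : (D x).card = 3 := by omega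
        obtain ⟨y, hyW'⟩ := hW'ne
        have hyW : y ∈ W := Finset.mem_of_mem_erase hyW'
        have hxy : x ≠ y := fun h => (Finset.mem_erase.mp hyW').1 h.symm
        rcases IH'.2 heq' with ⟨hETe, hDall⟩ | ⟨hETe, hDall⟩ | ⟨hETe, hDall⟩ | ⟨hETe, hDall⟩
        · refine Or.inl ⟨hETe, fun z hz => ?_⟩
          by_cases hzx : z = x
          · subst hzx
            have hsubD : D z ⊆ PiG2 := by
              intro p hp
              apply fact_mergeG2 p (hD z hz hp)
              intro q hq
              exact hIII z hz y hyW hxy p hp q ((hDall y hyW') ▸ hq)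
            exact Finset.eq_of_subset_of_card_le hsubD (by rw [hDx3']; decide)
          · exact hDall z (Finset.mem_erase.mpr ⟨hzx, hz⟩)
        · refine Or.inr (Or.inl ⟨hETe, fun z hz => ?_⟩)
          by_cases hzx : z = x
          · subst hzx
            have hsubD : D z ⊆ Pist0 := by
              intro p hp
              apply fact_merge0 p (hD z hz hp)
              intro q hq
              exact hIII z hz y hyW hxy p hp q ((hDall y hyW') ▸ hq)
            exact Finset.eq_of_subset_of_card_le hsubD (by rw [hDx3']; decide)
          · exact hDall z (Finset.mem_erase.mpr ⟨hzx, hz⟩)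
        · refine Or.inr (Or.inr (Or.inl ⟨hETe, fun z hz => ?_⟩))
          by_cases hzx : z = x
          · subst hzx
            have hsubD : D z ⊆ Pist2 := by
              intro p hp
              apply fact_merge2 p (hD z hz hp)
              intro q hq
              exact hIII z hz y hyW hxy p hp q ((hDall y hyW') ▸ hq)
            exact Finset.eq_of_subset_of_card_le hsubD (by rw [hDx3']; decide)
          · exact hDall z (Finset.mem_erase.mpr ⟨hzx, hz⟩)
        · refine Or.inr (Or.inr (Or.inr ⟨hETe, fun z hz => ?_⟩))
          by_cases hzx : z = x
          · subst hzx
            have hsubD : D z ⊆ Pist4 := by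
              intro p hp
              apply fact_merge4 p (hD z hz hp)
              intro q hq
              exact hIII z hz y hyW hxy p hp q ((hDall y hyW') ▸ hq)
            exact Finset.eq_of_subset_of_card_le hsubD (by rw [hDx3']; decide)
          · exact hDall z (Finset.mem_erase.mpr ⟨hzx, hz⟩)

end PfC

namespace PfC
open ThreeGraph Finset

/-! ### From structure to isomorphism -/

lemma mem_U20 {t : Finset ℕ} : t ∈ U20 ↔ t ⊆ R6 ∧ t.card = 3 := Finset.mem_powersetCard

lemma mem_G1_edges {n : ℕ} {e : Finset ℕ} :
    e ∈ (G1 n).edges ↔ e ⊆ Finset.range n ∧ e.card = 3 ∧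
      (e = {0,1,2} ∨ (3 ∈ e ∧ (e ∩ ({0,1,2} : Finset ℕ)).Nonempty)) := mem_mk3_edges

lemma mem_G2_edges {n : ℕ} {e : Finset ℕ} :
    e ∈ (G2 n).edges ↔ e ⊆ Finset.range n ∧ e.card = 3 ∧
      (e = {0,1,2} ∨ (e ∩ ({0,1,2} : Finset ℕ)).card = 2) := mem_mk3_edges

lemma G1_verts (n : ℕ) : (G1 n).verts = Finset.range n := rfl
lemma G2_verts (n : ℕ) : (G2 n).verts = Finset.range n := rfl

lemma edges_reconstruct {n : ℕ} {K : ThreeGraph} (hn : 7 ≤ n)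
    (hKv : K.verts = Finset.range n)
    (hA : ({0,1,2} : Finset ℕ) ∈ K.edges) (hB : ({2,3,4} : Finset ℕ) ∈ K.edges)
    (hC : ({4,5,0} : Finset ℕ) ∈ K.edges) (hP : ¬ HasCopy pathP K) (hconn : Connected K)
    (X PX : Finset (Finset ℕ)) (hX : ETH K = X)
    (hPX : ∀ x ∈ Finset.Ico 6 n, DXf K x = PX) :
    K.edges = X ∪ (Finset.Ico 6 n).biUnion (fun x => PX.image (insert x)) := by
  classical
  have h1 : K.edges = K.edges.filter (fun h => h ⊆ R6) ∪
      K.edges.filter (fun h => ¬ h ⊆ R6) :=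
    (Finset.filter_union_filter_not_eq _ _).symm
  rw [h1, edges_split hn hKv hA hB hC hP hconn]
  congr 1
  apply Finset.biUnion_congr rfl
  intro x hx
  rw [hPX x hx]

section Generic

/-- Generic lemma producing `Iso K (G1 n)` from a star-type structure. -/
lemma iso_G1_type {n : ℕ} {K : ThreeGraph} (hn : 7 ≤ n) (hKv : K.verts = Finset.range n)
    (σ : Equiv.Perm ℕ) (c : ℕ) (xyz : Finset ℕ) (PX : Finset (Finset ℕ))
    (hc6 : c < 6) (hxyzR : xyz ⊆ R6) (hxyz3 : xyz.card = 3) (hcx : c ∉ xyz)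
    (hσ6 : ∀ m, 6 ≤ m → σ m = m)
    (hσR : ∀ m, m < 6 → σ m < 6)
    (hσc : σ c = 3)
    (hσxyz : xyz.image σ = {0,1,2})
    (hPX : ∀ p, p ∈ PX ↔ ∃ s ∈ xyz, p = insert c {s})
    (hedges : K.edges =
      (U20.filter (fun t => t = xyz ∨ (c ∈ t ∧ (t ∩ xyz).Nonempty))) ∪
      (Finset.Ico 6 n).biUnion (fun x => PX.image (insert x))) :
    Iso K (G1 n) := by
  classical
  have himg : R6.image σ = R6 := by
    apply Finset.eq_of_subset_of_card_le
    · intro z hz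
      obtain ⟨a, ha, rfl⟩ := Finset.mem_image.mp hz
      exact Finset.mem_range.mpr (hσR a (Finset.mem_range.mp ha))
    · rw [Finset.card_image_of_injective _ σ.injective]
  have hσsymm6 : ∀ m, 6 ≤ m → σ.symm m = m := by
    intro m hm
    conv_lhs => rw [← hσ6 m hm]
    exact σ.symm_apply_apply m
  have hσsymm3 : σ.symm 3 = c := by
    rw [← hσc]; exact σ.symm_apply_apply c
  have hσsymmR : ∀ m, m < 6 → σ.symm m < 6 := by
    intro m hm
    have hm' : m ∈ R6 := Finset.mem_range.mpr hm
    rw [← himg] at hm'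
    obtain ⟨a, ha, rfl⟩ := Finset.mem_image.mp hm'
    rw [σ.symm_apply_apply]
    exact Finset.mem_range.mp ha
  have hσsymmxyz : ∀ s, s ∈ ({0,1,2} : Finset ℕ) → σ.symm s ∈ xyz := by
    intro s hs
    rw [← hσxyz] at hs
    obtain ⟨a, ha, rfl⟩ := Finset.mem_image.mp hs
    rwa [σ.symm_apply_apply]
  have hσs012 : ∀ s ∈ xyz, σ s ∈ ({0,1,2} : Finset ℕ) := by
    intro s hs
    rw [← hσxyz]
    exact Finset.mem_image_of_mem σ hs
  have h012lt : ∀ z ∈ ({0,1,2} : Finset ℕ), z < 3 := by decide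
  apply iso_perm σ
  · rw [hKv, G1_verts]
    ext z
    simp only [Finset.mem_image, Finset.mem_range]
    constructor
    · rintro ⟨a, ha, rfl⟩
      by_cases h6 : a < 6
      · have := hσR a h6; omega
      · rw [hσ6 a (by omega)]; omega
    · intro hz
      by_cases h6 : z < 6
      · have hz' : z ∈ R6 := Finset.mem_range.mpr h6
        rw [← himg] at hz'
        obtain ⟨a, ha, rfl⟩ := Finset.mem_image.mp hz'
        exact ⟨a, by have := Finset.mem_range.mp ha; omega, rfl⟩
      · exact ⟨z, by omega, hσ6 z (by omega)⟩
  · intro h hh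
    rw [hedges] at hh
    rcases Finset.mem_union.mp hh with hh | hh
    · obtain ⟨hU, hpred⟩ := Finset.mem_filter.mp hh
      obtain ⟨hhR, hh3⟩ := mem_U20.mp hU
      rw [mem_G1_edges]
      refine ⟨?_, ?_, ?_⟩
      · intro z hz
        obtain ⟨a, ha, rfl⟩ := Finset.mem_image.mp hz
        have := hσR a (Finset.mem_range.mp (hhR ha))
        rw [Finset.mem_range]; omega
      · rw [Finset.card_image_of_injective _ σ.injective]; exact hh3
      · rcases hpred with rfl | ⟨hch, hne⟩
        · exact Or.inl hσxyz
        · refine Or.inr ⟨?_, ?_⟩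
          · rw [← hσc]; exact Finset.mem_image_of_mem σ hch
          · obtain ⟨s, hs⟩ := hne
            exact ⟨σ s, Finset.mem_inter.mpr ⟨Finset.mem_image_of_mem σ (Finset.mem_inter.mp hs).1,
              hσs012 s (Finset.mem_inter.mp hs).2⟩⟩
    · obtain ⟨x, hx, hmem⟩ := Finset.mem_biUnion.mp hh
      obtain ⟨p, hpPX, rfl⟩ := Finset.mem_image.mp hmem
      obtain ⟨s, hsxyz, rfl⟩ := (hPX p).mp hpPX
      obtain ⟨hx6, hxn⟩ := Finset.mem_Ico.mp hx
      have hs6 : s < 6 := Finset.mem_range.mp (hxyzR hsxyz)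
      have hσs : σ s ∈ ({0,1,2} : Finset ℕ) := hσs012 s hsxyz
      have hσs3 : σ s < 3 := h012lt _ hσs
      have himgc : (insert x (insert c ({s} : Finset ℕ))).image σ
          = insert x (insert 3 ({σ s} : Finset ℕ)) := by
        simp only [Finset.image_insert, Finset.image_singleton, hσ6 x hx6, hσc]
      rw [himgc, mem_G1_edges]
      refine ⟨?_, ?_, Or.inr ⟨?_, ?_⟩⟩
      · intro z hz
        simp only [Finset.mem_insert, Finset.mem_singleton] at hz
        rw [Finset.mem_range]
        rcases hz with rfl | rfl | rfl <;> omega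
      · rw [Finset.card_insert_of_notMem, Finset.card_insert_of_notMem, Finset.card_singleton]
        · simp only [Finset.mem_singleton]; omega
        · simp only [Finset.mem_insert, Finset.mem_singleton]
          push_neg
          constructor <;> omega
      · simp
      · refine ⟨σ s, Finset.mem_inter.mpr ⟨?_, hσs⟩⟩
        simp
  · intro g hg
    rw [mem_G1_edges] at hg
    obtain ⟨hgsub, hg3, hgpred⟩ := hg
    rcases hgpred with rfl | ⟨h3g, s, hsmem⟩
    · have himg2 : ({0,1,2} : Finset ℕ).image σ.symm = xyz := by
        rw [← hσxyz, Finset.image_image]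
        have : ∀ z ∈ xyz, (⇑σ.symm ∘ ⇑σ) z = id z := fun z _ => σ.symm_apply_apply z
        rw [Finset.image_congr this, Finset.image_id]
      rw [himg2, hedges]
      apply Finset.mem_union_left
      exact Finset.mem_filter.mpr ⟨mem_U20.mpr ⟨hxyzR, hxyz3⟩, Or.inl rfl⟩
    · have hs1 : s ∈ g := (Finset.mem_inter.mp hsmem).1
      have hs2 : s ∈ ({0,1,2} : Finset ℕ) := (Finset.mem_inter.mp hsmem).2
      have hs3 : s < 3 := h012lt _ hs2
      by_cases hgR : g ⊆ R6
      · rw [hedges]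
        apply Finset.mem_union_left
        rw [Finset.mem_filter]
        refine ⟨mem_U20.mpr ⟨?_, ?_⟩, Or.inr ⟨?_, ?_⟩⟩
        · intro z hz
          obtain ⟨a, ha, rfl⟩ := Finset.mem_image.mp hz
          exact Finset.mem_range.mpr (hσsymmR a (Finset.mem_range.mp (hgR ha)))
        · rw [Finset.card_image_of_injective _ σ.symm.injective]; exact hg3
        · rw [← hσsymm3]; exact Finset.mem_image_of_mem _ h3g
        · exact ⟨σ.symm s, Finset.mem_inter.mpr ⟨Finset.mem_image_of_mem _ hs1,
            hσsymmxyz s hs2⟩⟩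
      · have hex : ∃ w ∈ g, 6 ≤ w := by
          by_contra hcon
          push_neg at hcon
          exact hgR fun z hz => Finset.mem_range.mpr (by have := hcon z hz; omega)
        obtain ⟨w, hwg, hw6⟩ := hex
        have hwn : w < n := Finset.mem_range.mp (hgsub hwg)
        have hgeq : g = {3, s, w} := by
          have hsub' : ({3, s, w} : Finset ℕ) ⊆ g := by
            intro z hz
            simp only [Finset.mem_insert, Finset.mem_singleton] at hz
            rcases hz with rfl | rfl | rfl
            · exact h3g
            · exact hs1
            · exact hwg
          have hcard' : ({3, s, w} : Finset ℕ).card = 3 := by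
            rw [Finset.card_insert_of_notMem, Finset.card_insert_of_notMem,
              Finset.card_singleton]
            · simp only [Finset.mem_singleton]; omega
            · simp only [Finset.mem_insert, Finset.mem_singleton]
              push_neg
              constructor <;> omega
          exact (Finset.eq_of_subset_of_card_le hsub' (by rw [hg3, hcard'])).symm
        have himg3 : g.image σ.symm = insert w (insert c ({σ.symm s} : Finset ℕ)) := by
          rw [hgeq]
          simp only [Finset.image_insert, Finset.image_singleton, hσsymm3, hσsymm6 w hw6]
          ext z
          simp only [Finset.mem_insert, Finset.mem_singleton]
          tauto
        rw [himg3, hedges]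
        apply Finset.mem_union_right
        rw [Finset.mem_biUnion]
        refine ⟨w, Finset.mem_Ico.mpr ⟨hw6, hwn⟩, ?_⟩
        rw [Finset.mem_image]
        exact ⟨insert c ({σ.symm s} : Finset ℕ),
          (hPX _).mpr ⟨σ.symm s, hσsymmxyz s hs2, rfl⟩, rfl⟩

end Generic
end PfC

namespace PfC
open ThreeGraph Finset

/-! ### The four structure isomorphisms -/

def sf2 : ℕ → ℕ := fun m => if m = 1 then 4 else if m = 2 then 3 else if m = 3 then 5
  else if m = 4 then 1 else if m = 5 then 2 else m
def tf2 : ℕ → ℕ := fun m => if m = 1 then 4 else if m = 2 then 5 else if m = 3 then 2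
  else if m = 4 then 1 else if m = 5 then 3 else m

def sigma2 : Equiv.Perm ℕ :=
  ⟨sf2, tf2, by
    intro x
    rcases lt_or_ge x 6 with h | h
    · interval_cases x <;> rfl
    · have h1 : sf2 x = x := by unfold sf2; split_ifs <;> omega
      rw [h1]; unfold tf2; split_ifs <;> omega, by
    intro x
    rcases lt_or_ge x 6 with h | h
    · interval_cases x <;> rfl
    · have h1 : tf2 x = x := by unfold tf2; split_ifs <;> omega
      rw [h1]; unfold sf2; split_ifs <;> omega⟩

lemma iso_st0 {n : ℕ} {K : ThreeGraph} (hn : 7 ≤ n) (hKv : K.verts = Finset.range n)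
    (hedges : K.edges = ETst0 ∪
      (Finset.Ico 6 n).biUnion (fun x => Pist0.image (insert x))) : Iso K (G1 n) := by
  apply iso_G1_type hn hKv ((Equiv.swap 0 3).trans (Equiv.swap 1 4)) 0 {2,3,4} Pist0
    (by omega) (by decide) (by decide) (by decide)
  · intro m hm
    rw [Equiv.trans_apply]
    rw [Equiv.swap_apply_of_ne_of_ne (show m ≠ 0 by omega) (show m ≠ 3 by omega)]
    exact Equiv.swap_apply_of_ne_of_ne (by omega) (by omega)
  · intro m hm
    interval_cases m <;> decide
  · decide
  · decide
  · intro p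
    constructor
    · intro hp
      simp only [Finset.mem_insert, Finset.mem_singleton] at hp
      rcases hp with rfl | rfl | rfl
      · exact ⟨2, by decide, by decide⟩
      · exact ⟨4, by decide, by decide⟩
      · exact ⟨3, by decide, by decide⟩
    · rintro ⟨s, hs, rfl⟩
      fin_cases hs <;> decide
  · exact hedges

lemma iso_st2 {n : ℕ} {K : ThreeGraph} (hn : 7 ≤ n) (hKv : K.verts = Finset.range n)
    (hedges : K.edges = ETst2 ∪
      (Finset.Ico 6 n).biUnion (fun x => Pist2.image (insert x))) : Iso K (G1 n) := by
  apply iso_G1_type hn hKv sigma2 2 {0,4,5} Pist2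
    (by omega) (by decide) (by decide) (by decide)
  · intro m hm
    show sf2 m = m
    unfold sf2; split_ifs <;> omega
  · intro m hm
    interval_cases m <;> decide
  · decide
  · decide
  · intro p
    constructor
    · intro hp
      simp only [Finset.mem_insert, Finset.mem_singleton] at hp
      rcases hp with rfl | rfl | rfl
      · exact ⟨0, by decide, by decide⟩
      · exact ⟨4, by decide, by decide⟩
      · exact ⟨5, by decide, by decide⟩
    · rintro ⟨s, hs, rfl⟩
      fin_cases hs <;> decide
  · exact hedges

lemma iso_st4 {n : ℕ} {K : ThreeGraph} (hn : 7 ≤ n) (hKv : K.verts = Finset.range n)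
    (hedges : K.edges = ETst4 ∪
      (Finset.Ico 6 n).biUnion (fun x => Pist4.image (insert x))) : Iso K (G1 n) := by
  apply iso_G1_type hn hKv (Equiv.swap 3 4) 4 {0,1,2} Pist4
    (by omega) (by decide) (by decide) (by decide)
  · intro m hm
    exact Equiv.swap_apply_of_ne_of_ne (by omega) (by omega)
  · intro m hm
    interval_cases m <;> decide
  · decide
  · decide
  · intro p
    constructor
    · intro hp
      simp only [Finset.mem_insert, Finset.mem_singleton] at hp
      rcases hp with rfl | rfl | rfl
      · exact ⟨2, by decide, by decide⟩
      · exact ⟨0, by decide, by decide⟩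
      · exact ⟨1, by decide, by decide⟩
    · rintro ⟨s, hs, rfl⟩
      fin_cases hs <;> decide
  · exact hedges

lemma iso_G2_struct {n : ℕ} {K : ThreeGraph} (hn : 7 ≤ n) (hKv : K.verts = Finset.range n)
    (hedges : K.edges = ETG2 ∪
      (Finset.Ico 6 n).biUnion (fun x => PiG2.image (insert x))) : Iso K (G2 n) := by
  classical
  have hσ6 : ∀ m, 6 ≤ m → (Equiv.swap 1 4 : Equiv.Perm ℕ) m = m := fun m hm =>
    Equiv.swap_apply_of_ne_of_ne (by omega) (by omega)
  have hσR : ∀ m, m < 6 → (Equiv.swap 1 4 : Equiv.Perm ℕ) m < 6 := by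
    intro m hm
    interval_cases m <;> decide
  have hσS : ({0,2,4} : Finset ℕ).image ⇑(Equiv.swap 1 4) = {0,1,2} := by decide
  have hσ012 : ({0,1,2} : Finset ℕ).image ⇑(Equiv.swap 1 4) = {0,2,4} := by decide
  have hprfact : ∀ pr ∈ (({0,1,2} : Finset ℕ)).powersetCard 2,
      pr.image ⇑(Equiv.swap 1 4) ∈ PiG2 := by decide
  have hinj : Function.Injective ⇑(Equiv.swap 1 4 : Equiv.Perm ℕ) :=
    (Equiv.swap 1 4).injective
  apply iso_perm (Equiv.swap 1 4)
  · rw [hKv, G2_verts]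
    ext z
    simp only [Finset.mem_image, Finset.mem_range]
    constructor
    · rintro ⟨a, ha, rfl⟩
      by_cases h6 : a < 6
      · have := hσR a h6; omega
      · rw [hσ6 a (by omega)]; omega
    · intro hz
      by_cases h6 : z < 6
      · refine ⟨Equiv.swap 1 4 z, by have := hσR z h6; omega, Equiv.swap_apply_self 1 4 z⟩
      · exact ⟨z, by omega, hσ6 z (by omega)⟩
  · intro h hh
    rw [hedges] at hh
    rcases Finset.mem_union.mp hh with hh | hh
    · obtain ⟨hU, h2S⟩ := Finset.mem_filter.mp hh
      obtain ⟨hhR, hh3⟩ := mem_U20.mp hU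
      rw [mem_G2_edges]
      refine ⟨?_, ?_, ?_⟩
      · intro z hz
        obtain ⟨a, ha, rfl⟩ := Finset.mem_image.mp hz
        have := hσR a (Finset.mem_range.mp (hhR ha))
        rw [Finset.mem_range]; omega
      · rw [Finset.card_image_of_injective _ hinj]; exact hh3
      · have hkey : (h.image ⇑(Equiv.swap 1 4) ∩ ({0,1,2} : Finset ℕ)).card
            = (h ∩ ({0,2,4} : Finset ℕ)).card := by
          rw [← hσS, ← Finset.image_inter _ _ hinj,
            Finset.card_image_of_injective _ hinj]
        have hle : (h ∩ ({0,2,4} : Finset ℕ)).card ≤ 3 :=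
          le_trans (Finset.card_le_card Finset.inter_subset_left) (le_of_eq hh3)
        have h23 : (h ∩ ({0,2,4} : Finset ℕ)).card = 2 ∨
            (h ∩ ({0,2,4} : Finset ℕ)).card = 3 := by omega
        rcases h23 with h23 | h23
        · right; rw [hkey]; exact h23
        · left
          have hsub1 : h ∩ ({0,2,4} : Finset ℕ) = h :=
            Finset.eq_of_subset_of_card_le Finset.inter_subset_left (by omega)
          have hsub2 : h ⊆ ({0,2,4} : Finset ℕ) := by
            rw [← hsub1]; exact Finset.inter_subset_right
          have heqS : h = ({0,2,4} : Finset ℕ) :=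
            Finset.eq_of_subset_of_card_le hsub2 (by rw [hh3]; decide)
          rw [heqS]; exact hσS
    · obtain ⟨x, hx, hmem⟩ := Finset.mem_biUnion.mp hh
      obtain ⟨p, hpPX, rfl⟩ := Finset.mem_image.mp hmem
      obtain ⟨hx6, hxn⟩ := Finset.mem_Ico.mp hx
      have hp' : p = {0,2} ∨ p = {2,4} ∨ p = {0,4} := by
        simpa only [Finset.mem_insert, Finset.mem_singleton] using hpPX
      have hximg : (insert x p).image ⇑(Equiv.swap 1 4)
          = insert x (p.image ⇑(Equiv.swap 1 4)) := by
        rw [Finset.image_insert, hσ6 x hx6]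
      rw [hximg, mem_G2_edges]
      rcases hp' with rfl | rfl | rfl
      · have himgp : ({0,2} : Finset ℕ).image ⇑(Equiv.swap 1 4) = {0,2} := by decide
        rw [himgp]
        refine ⟨?_, ?_, Or.inr ?_⟩
        · intro z hz
          simp only [Finset.mem_insert, Finset.mem_singleton] at hz
          rw [Finset.mem_range]
          rcases hz with rfl | rfl | rfl <;> omega
        · rw [Finset.card_insert_of_notMem (by simp; omega)]; decide
        · rw [Finset.insert_inter_of_notMem (by simp; omega)]; decide
      · have himgp : ({2,4} : Finset ℕ).image ⇑(Equiv.swap 1 4) = {2,1} := by decide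
        rw [himgp]
        refine ⟨?_, ?_, Or.inr ?_⟩
        · intro z hz
          simp only [Finset.mem_insert, Finset.mem_singleton] at hz
          rw [Finset.mem_range]
          rcases hz with rfl | rfl | rfl <;> omega
        · rw [Finset.card_insert_of_notMem (by simp; omega)]; decide
        · rw [Finset.insert_inter_of_notMem (by simp; omega)]; decide
      · have himgp : ({0,4} : Finset ℕ).image ⇑(Equiv.swap 1 4) = {0,1} := by decide
        rw [himgp]
        refine ⟨?_, ?_, Or.inr ?_⟩
        · intro z hz
          simp only [Finset.mem_insert, Finset.mem_singleton] at hz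
          rw [Finset.mem_range]
          rcases hz with rfl | rfl | rfl <;> omega
        · rw [Finset.card_insert_of_notMem (by simp; omega)]; decide
        · rw [Finset.insert_inter_of_notMem (by simp; omega)]; decide
  · intro g hg
    rw [mem_G2_edges] at hg
    obtain ⟨hgsub, hg3, hgpred⟩ := hg
    rw [Equiv.symm_swap]
    rcases hgpred with rfl | h2
    · rw [hσ012, hedges]
      apply Finset.mem_union_left
      decide
    · by_cases hgR : g ⊆ R6
      · rw [hedges]
        apply Finset.mem_union_left
        rw [ETG2, Finset.mem_filter]
        refine ⟨mem_U20.mpr ⟨?_, ?_⟩, ?_⟩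
        · intro z hz
          obtain ⟨a, ha, rfl⟩ := Finset.mem_image.mp hz
          exact Finset.mem_range.mpr (hσR a (Finset.mem_range.mp (hgR ha)))
        · rw [Finset.card_image_of_injective _ hinj]; exact hg3
        · have hkey : (g.image ⇑(Equiv.swap 1 4) ∩ ({0,2,4} : Finset ℕ)).card
              = (g ∩ ({0,1,2} : Finset ℕ)).card := by
            rw [← hσ012, ← Finset.image_inter _ _ hinj,
              Finset.card_image_of_injective _ hinj]
          rw [hkey, h2]
      · have hex : ∃ w ∈ g, 6 ≤ w := by
          by_contra hcon
          push_neg at hcon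
          exact hgR fun z hz => Finset.mem_range.mpr (by have := hcon z hz; omega)
        obtain ⟨w, hwg, hw6⟩ := hex
        have hwn : w < n := Finset.mem_range.mp (hgsub hwg)
        set pr : Finset ℕ := g ∩ {0,1,2} with hprdef
        have hwpr : w ∉ pr := by
          intro hc
          have := Finset.inter_subset_right hc
          simp only [Finset.mem_insert, Finset.mem_singleton] at this
          omega
        have hgw : insert w pr = g := by
          apply Finset.eq_of_subset_of_card_le
          · intro z hz
            rcases Finset.mem_insert.mp hz with rfl | hz'
            · exact hwg
            · exact Finset.inter_subset_left hz'
          · rw [Finset.card_insert_of_notMem hwpr, hprdef, h2, hg3]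
        have himgg : g.image ⇑(Equiv.swap 1 4) = insert w (pr.image ⇑(Equiv.swap 1 4)) := by
          rw [← hgw, Finset.image_insert, hσ6 w hw6]
        rw [himgg, hedges]
        apply Finset.mem_union_right
        rw [Finset.mem_biUnion]
        refine ⟨w, Finset.mem_Ico.mpr ⟨hw6, hwn⟩, ?_⟩
        rw [Finset.mem_image]
        refine ⟨pr.image ⇑(Equiv.swap 1 4), ?_, rfl⟩
        apply hprfact
        rw [Finset.mem_powersetCard]
        exact ⟨Finset.inter_subset_right, h2⟩

end PfC

namespace PfC
open ThreeGraph Finset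

/-! ### Edge counts of `G1 n` and `G2 n` -/

def cG1 (n : ℕ) : Finset (Finset ℕ) :=
  ((Finset.range n).powersetCard 3).filter
    (fun e => e = {0,1,2} ∨ (3 ∈ e ∧ (e ∩ ({0,1,2} : Finset ℕ)).Nonempty))

def cG2 (n : ℕ) : Finset (Finset ℕ) :=
  ((Finset.range n).powersetCard 3).filter
    (fun e => e = {0,1,2} ∨ (e ∩ ({0,1,2} : Finset ℕ)).card = 2)

lemma G1_edges_eq (n : ℕ) : (G1 n).edges = cG1 n := by
  classical
  simp only [G1, mk3, cG1]
  apply Finset.filter_congr_decidable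

lemma G2_edges_eq (n : ℕ) : (G2 n).edges = cG2 n := by
  classical
  simp only [G2, mk3, cG2]
  apply Finset.filter_congr_decidable

lemma mem_cG1 {n : ℕ} {e : Finset ℕ} :
    e ∈ cG1 n ↔ e ⊆ Finset.range n ∧ e.card = 3 ∧
      (e = {0,1,2} ∨ (3 ∈ e ∧ (e ∩ ({0,1,2} : Finset ℕ)).Nonempty)) := by
  rw [cG1, Finset.mem_filter, Finset.mem_powersetCard]
  tauto

lemma mem_cG2 {n : ℕ} {e : Finset ℕ} :
    e ∈ cG2 n ↔ e ⊆ Finset.range n ∧ e.card = 3 ∧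
      (e = {0,1,2} ∨ (e ∩ ({0,1,2} : Finset ℕ)).card = 2) := by
  rw [cG2, Finset.mem_filter, Finset.mem_powersetCard]
  tauto

lemma triple_card3 {s t w : ℕ} (h1 : s ≠ t) (h2 : s ≠ w) (h3 : t ≠ w) :
    ({s, t, w} : Finset ℕ).card = 3 := by
  rw [Finset.card_insert_of_notMem, Finset.card_insert_of_notMem, Finset.card_singleton]
  · simpa using h3
  · simp only [Finset.mem_insert, Finset.mem_singleton]
    push_neg
    exact ⟨h1, h2⟩

lemma triple_eq_of_mem {e : Finset ℕ} {s t w : ℕ} (he : e.card = 3)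
    (hs : s ∈ e) (ht : t ∈ e) (hw : w ∈ e) (h1 : s ≠ t) (h2 : s ≠ w) (h3 : t ≠ w) :
    e = {s, t, w} := by
  have hsub : ({s, t, w} : Finset ℕ) ⊆ e := by
    intro z hz
    simp only [Finset.mem_insert, Finset.mem_singleton] at hz
    rcases hz with rfl | rfl | rfl <;> assumption
  exact (Finset.eq_of_subset_of_card_le hsub (by rw [he, triple_card3 h1 h2 h3])).symm

lemma triple_mem_cG1 {n s m : ℕ} (hs : s < 3) (hm : 7 ≤ m) (hmn : m < n) :
    ({s, 3, m} : Finset ℕ) ∈ cG1 n := by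
  rw [mem_cG1]
  refine ⟨?_, triple_card3 (by omega) (by omega) (by omega), Or.inr ⟨by simp, ⟨s, ?_⟩⟩⟩
  · intro z hz
    simp only [Finset.mem_insert, Finset.mem_singleton] at hz
    rw [Finset.mem_range]
    rcases hz with rfl | rfl | rfl <;> omega
  · simp only [Finset.mem_inter, Finset.mem_insert, Finset.mem_singleton]
    exact ⟨by tauto, by omega⟩

lemma triple_mem_cG2 {n s t m : ℕ} (hs : s < 3) (ht : t < 3) (hst : s ≠ t)
    (hm : 7 ≤ m) (hmn : m < n) : ({s, t, m} : Finset ℕ) ∈ cG2 n := by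
  rw [mem_cG2]
  refine ⟨?_, triple_card3 (by omega) (by omega) (by omega), Or.inr ?_⟩
  · intro z hz
    simp only [Finset.mem_insert, Finset.mem_singleton] at hz
    rw [Finset.mem_range]
    rcases hz with rfl | rfl | rfl <;> omega
  · have : ({s, t, m} : Finset ℕ) ∩ ({0,1,2} : Finset ℕ) = {s, t} := by
      ext z
      simp only [Finset.mem_inter, Finset.mem_insert, Finset.mem_singleton]
      constructor
      · rintro ⟨rfl | rfl | rfl, hz⟩
        · exact Or.inl rfl
        · exact Or.inr rfl
        · omega
      · rintro (rfl | rfl)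
        · exact ⟨Or.inl rfl, by omega⟩
        · exact ⟨Or.inr (Or.inl rfl), by omega⟩
    rw [this, Finset.card_insert_of_notMem (by simpa using hst), Finset.card_singleton]

lemma cG1_step (m : ℕ) (hm : 7 ≤ m) :
    cG1 (m+1) = cG1 m ∪ {{0,3,m},{1,3,m},{2,3,m}} := by
  ext e
  rw [Finset.mem_union, mem_cG1]
  constructor
  · rintro ⟨hsub, h3, hpred⟩
    by_cases hme : m ∈ e
    · right
      rcases hpred with rfl | ⟨h3e, s, hs⟩
      · exfalso
        simp only [Finset.mem_insert, Finset.mem_singleton] at hme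
        omega
      · have hs1 : s ∈ e := (Finset.mem_inter.mp hs).1
        have hs2 : s ∈ ({0,1,2} : Finset ℕ) := (Finset.mem_inter.mp hs).2
        simp only [Finset.mem_insert, Finset.mem_singleton] at hs2
        have heq : e = {s, 3, m} :=
          triple_eq_of_mem h3 hs1 h3e hme (by omega) (by omega) (by omega)
        simp only [Finset.mem_insert, Finset.mem_singleton]
        rcases hs2 with rfl | rfl | rfl
        · exact Or.inl heq
        · exact Or.inr (Or.inl heq)
        · exact Or.inr (Or.inr heq)
    · left
      rw [mem_cG1]
      refine ⟨?_, h3, hpred⟩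
      intro z hz
      have := Finset.mem_range.mp (hsub hz)
      rw [Finset.mem_range]
      rcases Nat.lt_succ_iff_lt_or_eq.mp this with h | h
      · exact h
      · exact absurd (h ▸ hz) hme
  · rintro (hmem | hmem)
    · rw [mem_cG1] at hmem
      obtain ⟨hsub, h3, hpred⟩ := hmem
      exact ⟨hsub.trans (Finset.range_subset_range.mpr (by omega)), h3, hpred⟩
    · simp only [Finset.mem_insert, Finset.mem_singleton] at hmem
      have h7 : 7 ≤ m + 1 := by omega
      rcases hmem with rfl | rfl | rfl
      · exact mem_cG1.mp (triple_mem_cG1 (by omega) hm (by omega))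
      · exact mem_cG1.mp (triple_mem_cG1 (by omega) hm (by omega))
      · exact mem_cG1.mp (triple_mem_cG1 (by omega) hm (by omega))

lemma cG2_step (m : ℕ) (hm : 7 ≤ m) :
    cG2 (m+1) = cG2 m ∪ {{0,1,m},{0,2,m},{1,2,m}} := by
  ext e
  rw [Finset.mem_union, mem_cG2]
  constructor
  · rintro ⟨hsub, h3, hpred⟩
    by_cases hme : m ∈ e
    · right
      rcases hpred with rfl | h2
      · exfalso
        simp only [Finset.mem_insert, Finset.mem_singleton] at hme
        omega
      · obtain ⟨s, t, hst, hpr⟩ := Finset.card_eq_two.mp h2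
        have hs1 : s ∈ e ∩ ({0,1,2} : Finset ℕ) := hpr ▸ (by simp)
        have ht1 : t ∈ e ∩ ({0,1,2} : Finset ℕ) := hpr ▸ (by simp)
        have hse : s ∈ e := (Finset.mem_inter.mp hs1).1
        have hte : t ∈ e := (Finset.mem_inter.mp ht1).1
        have hs2 : s ∈ ({0,1,2} : Finset ℕ) := (Finset.mem_inter.mp hs1).2
        have ht2 : t ∈ ({0,1,2} : Finset ℕ) := (Finset.mem_inter.mp ht1).2
        simp only [Finset.mem_insert, Finset.mem_singleton] at hs2 ht2
        have heq : e = {s, t, m} :=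
          triple_eq_of_mem h3 hse hte hme hst (by omega) (by omega)
        have hsym : e = {t, s, m} := by
          rw [heq]
          ext z
          simp only [Finset.mem_insert, Finset.mem_singleton]
          tauto
        simp only [Finset.mem_insert, Finset.mem_singleton]
        rcases hs2 with rfl | rfl | rfl <;> rcases ht2 with rfl | rfl | rfl
        · exact absurd rfl hst
        · exact Or.inl heq
        · exact Or.inr (Or.inl heq)
        · exact Or.inl hsym
        · exact absurd rfl hst
        · exact Or.inr (Or.inr heq)
        · exact Or.inr (Or.inl hsym)
        · exact Or.inr (Or.inr hsym)
        · exact absurd rfl hst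
    · left
      rw [mem_cG2]
      refine ⟨?_, h3, hpred⟩
      intro z hz
      have := Finset.mem_range.mp (hsub hz)
      rw [Finset.mem_range]
      rcases Nat.lt_succ_iff_lt_or_eq.mp this with h | h
      · exact h
      · exact absurd (h ▸ hz) hme
  · rintro (hmem | hmem)
    · rw [mem_cG2] at hmem
      obtain ⟨hsub, h3, hpred⟩ := hmem
      exact ⟨hsub.trans (Finset.range_subset_range.mpr (by omega)), h3, hpred⟩
    · simp only [Finset.mem_insert, Finset.mem_singleton] at hmem
      rcases hmem with rfl | rfl | rfl
      · exact mem_cG2.mp (triple_mem_cG2 (by omega) (by omega) (by omega) hm (by omega))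
      · exact mem_cG2.mp (triple_mem_cG2 (by omega) (by omega) (by omega) hm (by omega))
      · exact mem_cG2.mp (triple_mem_cG2 (by omega) (by omega) (by omega) hm (by omega))

lemma new_triples_card (a b m : ℕ) (ha : a < 3) (hb : b < 3) (hab : a ≠ b) (hm : 7 ≤ m) :
    ({({a,3,m} : Finset ℕ) , {b,3,m}} : Finset (Finset ℕ)).card = 2 := by
  rw [Finset.card_insert_of_notMem, Finset.card_singleton]
  simp only [Finset.mem_singleton]
  intro hcon
  have : a ∈ ({b, 3, m} : Finset ℕ) := hcon ▸ (by simp)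
  simp only [Finset.mem_insert, Finset.mem_singleton] at this
  omega

lemma cG1_card : ∀ n, 7 ≤ n → (cG1 n).card = 3 * n - 8 := by
  intro n hn
  induction n, hn using Nat.le_induction with
  | base => decide
  | succ m hm ih =>
    rw [cG1_step m hm, Finset.card_union_of_disjoint, ih]
    · have hc3 : ({({0,3,m} : Finset ℕ), {1,3,m}, {2,3,m}} : Finset (Finset ℕ)).card = 3 := by
        rw [Finset.card_insert_of_notMem, Finset.card_insert_of_notMem,
          Finset.card_singleton]
        · simp only [Finset.mem_singleton]
          intro hcon
          have : (1:ℕ) ∈ ({2, 3, m} : Finset ℕ) := hcon ▸ (by simp)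
          simp only [Finset.mem_insert, Finset.mem_singleton] at this
          omega
        · simp only [Finset.mem_insert, Finset.mem_singleton]
          push_neg
          constructor <;> intro hcon
          · have : (0:ℕ) ∈ ({1, 3, m} : Finset ℕ) := hcon ▸ (by simp)
            simp only [Finset.mem_insert, Finset.mem_singleton] at this
            omega
          · have : (0:ℕ) ∈ ({2, 3, m} : Finset ℕ) := hcon ▸ (by simp)
            simp only [Finset.mem_insert, Finset.mem_singleton] at this
            omega
      rw [hc3]
      omega
    · rw [Finset.disjoint_right]
      intro h hmem hG
      rw [mem_cG1] at hG
      have hsub := hG.1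
      simp only [Finset.mem_insert, Finset.mem_singleton] at hmem
      have hmh : m ∈ h := by
        rcases hmem with rfl | rfl | rfl <;> simp
      have := Finset.mem_range.mp (hsub hmh)
      omega

lemma cG2_card : ∀ n, 7 ≤ n → (cG2 n).card = 3 * n - 8 := by
  intro n hn
  induction n, hn using Nat.le_induction with
  | base => decide
  | succ m hm ih =>
    rw [cG2_step m hm, Finset.card_union_of_disjoint, ih]
    · have hc3 : ({({0,1,m} : Finset ℕ), {0,2,m}, {1,2,m}} : Finset (Finset ℕ)).card = 3 := by
        rw [Finset.card_insert_of_notMem, Finset.card_insert_of_notMem,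
          Finset.card_singleton]
        · simp only [Finset.mem_singleton]
          intro hcon
          have : (1:ℕ) ∈ ({1, 2, m} : Finset ℕ) := by simp
          rw [← hcon] at this
          simp only [Finset.mem_insert, Finset.mem_singleton] at this
          omega
        · simp only [Finset.mem_insert, Finset.mem_singleton]
          push_neg
          constructor <;> intro hcon
          · have : (2:ℕ) ∈ ({0, 2, m} : Finset ℕ) := by simp
            rw [← hcon] at this
            simp only [Finset.mem_insert, Finset.mem_singleton] at this
            omega
          · have : (2:ℕ) ∈ ({1, 2, m} : Finset ℕ) := by simp
            rw [← hcon] at this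
            simp only [Finset.mem_insert, Finset.mem_singleton] at this
            omega
      rw [hc3]
      omega
    · rw [Finset.disjoint_right]
      intro h hmem hG
      rw [mem_cG2] at hG
      have hsub := hG.1
      simp only [Finset.mem_insert, Finset.mem_singleton] at hmem
      have hmh : m ∈ h := by
        rcases hmem with rfl | rfl | rfl <;> simp
      have := Finset.mem_range.mp (hsub hmh)
      omega

lemma G1_card (n : ℕ) (hn : 7 ≤ n) : (G1 n).edges.card = 3 * n - 8 := by
  rw [G1_edges_eq]; exact cG1_card n hn

lemma G2_card (n : ℕ) (hn : 7 ≤ n) : (G2 n).edges.card = 3 * n - 8 := by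
  rw [G2_edges_eq]; exact cG2_card n hn

end PfC

namespace PfC
open ThreeGraph Finset

/-! ### Properties of `G1 n` and `G2 n` -/

lemma G1_intersecting {n : ℕ} : ∀ e ∈ (G1 n).edges, ∀ f ∈ (G1 n).edges,
    (e ∩ f).Nonempty := by
  intro e he f hf
  rw [mem_G1_edges] at he hf
  rcases he.2.2 with rfl | ⟨h3e, se, hse⟩ <;> rcases hf.2.2 with rfl | ⟨h3f, sf, hsf⟩
  · exact ⟨0, by simp⟩
  · exact ⟨sf, Finset.mem_inter.mpr ⟨(Finset.mem_inter.mp hsf).2, (Finset.mem_inter.mp hsf).1⟩⟩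
  · exact ⟨se, Finset.mem_inter.mpr ⟨(Finset.mem_inter.mp hse).1, (Finset.mem_inter.mp hse).2⟩⟩
  · exact ⟨3, Finset.mem_inter.mpr ⟨h3e, h3f⟩⟩

lemma G2_intersecting {n : ℕ} : ∀ e ∈ (G2 n).edges, ∀ f ∈ (G2 n).edges,
    (e ∩ f).Nonempty := by
  intro e he f hf
  rw [mem_G2_edges] at he hf
  have hAe : 2 ≤ (e ∩ ({0,1,2} : Finset ℕ)).card := by
    rcases he.2.2 with rfl | h2
    · rw [Finset.inter_self]; omega
    · omega
  have hAf : 2 ≤ (f ∩ ({0,1,2} : Finset ℕ)).card := by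
    rcases hf.2.2 with rfl | h2
    · rw [Finset.inter_self]; omega
    · omega
  have hsub : (e ∩ ({0,1,2} : Finset ℕ)) ∪ (f ∩ ({0,1,2} : Finset ℕ)) ⊆
      ({0,1,2} : Finset ℕ) :=
    Finset.union_subset Finset.inter_subset_right Finset.inter_subset_right
  have hcard := Finset.card_union_add_card_inter (e ∩ ({0,1,2} : Finset ℕ))
    (f ∩ ({0,1,2} : Finset ℕ))
  have hle : ((e ∩ ({0,1,2} : Finset ℕ)) ∪ (f ∩ ({0,1,2} : Finset ℕ))).card ≤ 3 := by
    have := Finset.card_le_card hsub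
    simpa using this
  have hpos : 0 < ((e ∩ ({0,1,2} : Finset ℕ)) ∩ (f ∩ ({0,1,2} : Finset ℕ))).card := by omega
  obtain ⟨z, hz⟩ := Finset.card_pos.mp hpos
  simp only [Finset.mem_inter] at hz
  exact ⟨z, Finset.mem_inter.mpr ⟨hz.1.1, hz.2.1⟩⟩

lemma G1_pathP_free (n : ℕ) : ¬ HasCopy pathP (G1 n) := by
  intro h
  obtain ⟨e1, he1, e2, he2, hdisj⟩ := disjoint_edges_of_pathP h
  obtain ⟨z, hz⟩ := G1_intersecting e1 he1 e2 he2
  rw [hdisj] at hz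
  exact absurd hz (Finset.notMem_empty z)

lemma G2_pathP_free (n : ℕ) : ¬ HasCopy pathP (G2 n) := by
  intro h
  obtain ⟨e1, he1, e2, he2, hdisj⟩ := disjoint_edges_of_pathP h
  obtain ⟨z, hz⟩ := G2_intersecting e1 he1 e2 he2
  rw [hdisj] at hz
  exact absurd hz (Finset.notMem_empty z)

lemma G1_adj_hub {n : ℕ} (hn : 7 ≤ n) : ∀ u ∈ (G1 n).verts, u ≠ 3 → (G1 n).Adj u 3 := by
  intro u hu hu3
  rw [G1_verts, Finset.mem_range] at hu
  by_cases h3 : u < 3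
  · refine ⟨{u, 3, 4}, ?_, by simp, by simp⟩
    rw [mem_G1_edges]
    refine ⟨?_, triple_card3 (by omega) (by omega) (by omega), Or.inr ⟨by simp, ⟨u, ?_⟩⟩⟩
    · intro z hz
      simp only [Finset.mem_insert, Finset.mem_singleton] at hz
      rw [Finset.mem_range]
      rcases hz with rfl | rfl | rfl <;> omega
    · exact Finset.mem_inter.mpr ⟨by simp, by
        simp only [Finset.mem_insert, Finset.mem_singleton]; omega⟩
  · refine ⟨{0, 3, u}, ?_, by simp, by simp⟩
    rw [mem_G1_edges]
    refine ⟨?_, triple_card3 (by omega) (by omega) (by omega), Or.inr ⟨by simp, ⟨0, ?_⟩⟩⟩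
    · intro z hz
      simp only [Finset.mem_insert, Finset.mem_singleton] at hz
      rw [Finset.mem_range]
      rcases hz with rfl | rfl | rfl <;> omega
    · exact Finset.mem_inter.mpr ⟨by simp, by simp⟩

lemma G2_adj_hub {n : ℕ} (hn : 7 ≤ n) : ∀ u ∈ (G2 n).verts, u ≠ 0 → (G2 n).Adj u 0 := by
  intro u hu hu0
  rw [G2_verts, Finset.mem_range] at hu
  by_cases h3 : u < 3
  · refine ⟨{u, 0, 4}, ?_, by simp, by simp⟩
    rw [mem_G2_edges]
    refine ⟨?_, triple_card3 (by omega) (by omega) (by omega), Or.inr ?_⟩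
    · intro z hz
      simp only [Finset.mem_insert, Finset.mem_singleton] at hz
      rw [Finset.mem_range]
      rcases hz with rfl | rfl | rfl <;> omega
    · have : ({u, 0, 4} : Finset ℕ) ∩ ({0,1,2} : Finset ℕ) = {u, 0} := by
        ext z
        simp only [Finset.mem_inter, Finset.mem_insert, Finset.mem_singleton]
        constructor
        · rintro ⟨rfl | rfl | rfl, hz⟩
          · exact Or.inl rfl
          · exact Or.inr rfl
          · omega
        · rintro (rfl | rfl)
          · exact ⟨Or.inl rfl, by omega⟩
          · exact ⟨Or.inr (Or.inl rfl), by omega⟩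
      rw [this, Finset.card_insert_of_notMem (by simpa using hu0), Finset.card_singleton]
  · refine ⟨{0, 1, u}, ?_, by simp, by simp⟩
    rw [mem_G2_edges]
    refine ⟨?_, triple_card3 (by omega) (by omega) (by omega), Or.inr ?_⟩
    · intro z hz
      simp only [Finset.mem_insert, Finset.mem_singleton] at hz
      rw [Finset.mem_range]
      rcases hz with rfl | rfl | rfl <;> omega
    · have : ({0, 1, u} : Finset ℕ) ∩ ({0,1,2} : Finset ℕ) = {0, 1} := by
        ext z
        simp only [Finset.mem_inter, Finset.mem_insert, Finset.mem_singleton]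
        constructor
        · rintro ⟨rfl | rfl | rfl, hz⟩
          · exact Or.inl rfl
          · exact Or.inr rfl
          · omega
        · rintro (rfl | rfl)
          · exact ⟨Or.inl rfl, by omega⟩
          · exact ⟨Or.inr (Or.inl rfl), by omega⟩
      rw [this]
      decide

lemma connected_of_hub {H : ThreeGraph} (hub : ℕ)
    (hadj : ∀ u ∈ H.verts, u ≠ hub → H.Adj u hub) : Connected H := by
  intro u hu v hv
  have hstep : ∀ w ∈ H.verts, Relation.ReflTransGen H.Adj w hub := by
    intro w hw
    by_cases hwh : w = hub
    · subst hwh; exact Relation.ReflTransGen.refl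
    · exact Relation.ReflTransGen.single (hadj w hw hwh)
  have hback : ∀ w ∈ H.verts, Relation.ReflTransGen H.Adj hub w := by
    intro w hw
    by_cases hwh : w = hub
    · subst hwh; exact Relation.ReflTransGen.refl
    · obtain ⟨e, he, hwe, hhe⟩ := hadj w hw hwh
      exact Relation.ReflTransGen.single ⟨e, he, hhe, hwe⟩
  exact (hstep u hu).trans (hback v hv)

lemma G1_connected {n : ℕ} (hn : 7 ≤ n) : Connected (G1 n) :=
  connected_of_hub 3 (G1_adj_hub hn)

lemma G2_connected {n : ℕ} (hn : 7 ≤ n) : Connected (G2 n) :=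
  connected_of_hub 0 (G2_adj_hub hn)

def g1map : ℕ → ℕ := fun m => if m = 0 then 1 else if m = 1 then 2 else if m = 2 then 0
  else if m = 3 then 4 else if m = 4 then 3 else 5

def g2map : ℕ → ℕ := fun m => if m = 0 then 0 else if m = 1 then 3 else if m = 2 then 1
  else if m = 3 then 4 else if m = 4 then 2 else 5

lemma g1map_le : ∀ m, g1map m ≤ 5 := by
  intro m; unfold g1map; split_ifs <;> omega

lemma g2map_le : ∀ m, g2map m ≤ 5 := by
  intro m; unfold g2map; split_ifs <;> omega

lemma sub_range_of_le5 {n : ℕ} (hn : 7 ≤ n) {e : Finset ℕ} (he : ∀ z ∈ e, z ≤ 5) :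
    e ⊆ Finset.range n := by
  intro z hz
  rw [Finset.mem_range]
  have := he z hz
  omega

lemma G1_triC {n : ℕ} (hn : 7 ≤ n) : HasCopy triC (G1 n) := by
  refine ⟨g1map, ?_, ?_, ?_⟩
  · rw [triC_verts]
    intro a ha b hb hab
    simp only [Finset.coe_range, Set.mem_Iio] at ha hb
    interval_cases a <;> interval_cases b <;> simp_all [g1map]
  · rw [triC_verts]
    intro m hm
    rw [G1_verts, Finset.mem_range]
    have := g1map_le m
    omega
  · intro e he
    rw [mem_triC_edges] at he
    obtain ⟨-, -, he | he | he⟩ := he <;> subst he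
    · have himg : Finset.image g1map {0,1,2} = ({1,2,0} : Finset ℕ) := by decide
      rw [himg, mem_G1_edges]
      refine ⟨sub_range_of_le5 hn ?_, by decide, by decide⟩
      intro z hz
      simp only [Finset.mem_insert, Finset.mem_singleton] at hz
      omega
    · have himg : Finset.image g1map {2,3,4} = ({0,4,3} : Finset ℕ) := by decide
      rw [himg, mem_G1_edges]
      refine ⟨sub_range_of_le5 hn ?_, by decide, by decide⟩
      intro z hz
      simp only [Finset.mem_insert, Finset.mem_singleton] at hz
      omega
    · have himg : Finset.image g1map {4,5,0} = ({3,5,1} : Finset ℕ) := by decide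
      rw [himg, mem_G1_edges]
      refine ⟨sub_range_of_le5 hn ?_, by decide, by decide⟩
      intro z hz
      simp only [Finset.mem_insert, Finset.mem_singleton] at hz
      omega

lemma G2_triC {n : ℕ} (hn : 7 ≤ n) : HasCopy triC (G2 n) := by
  refine ⟨g2map, ?_, ?_, ?_⟩
  · rw [triC_verts]
    intro a ha b hb hab
    simp only [Finset.coe_range, Set.mem_Iio] at ha hb
    interval_cases a <;> interval_cases b <;> simp_all [g2map]
  · rw [triC_verts]
    intro m hm
    rw [G2_verts, Finset.mem_range]
    have := g2map_le m
    omega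
  · intro e he
    rw [mem_triC_edges] at he
    obtain ⟨-, -, he | he | he⟩ := he <;> subst he
    · have himg : Finset.image g2map {0,1,2} = ({0,3,1} : Finset ℕ) := by decide
      rw [himg, mem_G2_edges]
      refine ⟨sub_range_of_le5 hn ?_, by decide, by decide⟩
      intro z hz
      simp only [Finset.mem_insert, Finset.mem_singleton] at hz
      omega
    · have himg : Finset.image g2map {2,3,4} = ({1,4,2} : Finset ℕ) := by decide
      rw [himg, mem_G2_edges]
      refine ⟨sub_range_of_le5 hn ?_, by decide, by decide⟩
      intro z hz
      simp only [Finset.mem_insert, Finset.mem_singleton] at hz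
      omega
    · have himg : Finset.image g2map {4,5,0} = ({2,5,0} : Finset ℕ) := by decide
      rw [himg, mem_G2_edges]
      refine ⟨sub_range_of_le5 hn ?_, by decide, by decide⟩
      intro z hz
      simp only [Finset.mem_insert, Finset.mem_singleton] at hz
      omega

end PfC

namespace PfC
open ThreeGraph Finset

/-! ### Main lemma -/

lemma main_lemma (n : ℕ) (hn : 7 ≤ n) (H : ThreeGraph) (hcard : H.verts.card = n)
    (hPf : ¬ HasCopy pathP H) (hconn : Connected H) (htri : HasCopy triC H) :
    H.edges.card ≤ 3 * n - 8 ∧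
      (H.edges.card = 3 * n - 8 → Iso H (G1 n) ∨ Iso H (G2 n)) := by
  obtain ⟨K, hiso, hKv, hA, hB, hC⟩ := normalize H hcard htri
  have hisoKH := iso_symm hiso
  have hPK : ¬ HasCopy pathP K := fun h => hPf (hasCopy_of_iso h hisoKH)
  have hconnK : Connected K := connected_of_iso hconn hiso
  have hcards : H.edges.card = K.edges.card := iso_card_edges hiso
  have hWne : (Finset.Ico 6 n).Nonempty := ⟨6, Finset.mem_Ico.mpr ⟨le_refl 6, by omega⟩⟩
  have hET : ETH K ⊆ U20 := by
    intro t ht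
    rw [mem_U20]
    exact ⟨(Finset.mem_filter.mp ht).2, K.card3 t (Finset.mem_filter.mp ht).1⟩
  have hD : ∀ x ∈ Finset.Ico 6 n, DXf K x ⊆ Pi6 := fun x _ => Finset.filter_subset _ _
  have hDne := DX_nonempty hn hKv hA hB hC hPK hconnK
  have hI := condI (n := n) hA hB hC hPK
  have hII := condII (n := n) (K := K) hPK
  have hIII := condIII (n := n) hA hB hC hPK
  have hcore := core (Finset.Ico 6 n) hWne (ETH K) (DXf K) hET hD hDne hI hII hIII
  have hdecomp := count_decomp hn hKv hA hB hC hPK hconnK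
  have hIcoCard : (Finset.Ico 6 n).card = n - 6 := Nat.card_Ico 6 n
  constructor
  · rw [hcards, hdecomp]
    have := hcore.1
    omega
  · intro heq
    have heqK : (ETH K).card + ∑ x ∈ Finset.Ico 6 n, (DXf K x).card
        = 3 * (Finset.Ico 6 n).card + 10 := by
      rw [← hdecomp, ← hcards]
      omega
    rcases hcore.2 heqK with ⟨hETe, hDall⟩ | ⟨hETe, hDall⟩ | ⟨hETe, hDall⟩ | ⟨hETe, hDall⟩
    · exact Or.inr (iso_trans hiso (iso_G2_struct hn hKv
        (edges_reconstruct hn hKv hA hB hC hPK hconnK ETG2 PiG2 hETe hDall)))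
    · exact Or.inl (iso_trans hiso (iso_st0 hn hKv
        (edges_reconstruct hn hKv hA hB hC hPK hconnK ETst0 Pist0 hETe hDall)))
    · exact Or.inl (iso_trans hiso (iso_st2 hn hKv
        (edges_reconstruct hn hKv hA hB hC hPK hconnK ETst2 Pist2 hETe hDall)))
    · exact Or.inl (iso_trans hiso (iso_st4 hn hKv
        (edges_reconstruct hn hKv hA hB hC hPK hconnK ETst4 Pist4 hETe hDall)))

end PfC



open ThreeGraph
/-- `ex_conn(n;P|C) = 3n − 8` and `Ex_conn(n;P|C) = {G₁(n), G₂(n)}`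
for `n ≥ 7`. -/
theorem conn_conditional_turan_P_C (n : ℕ) (hn : 7 ≤ n) :
    (∀ H : ThreeGraph, H.verts.card = n → ¬ HasCopy pathP H → Connected H →
      HasCopy triC H → H.edges.card ≤ 3 * n - 8) ∧
    (∀ H : ThreeGraph, H.verts.card = n → ¬ HasCopy pathP H → Connected H →
      HasCopy triC H →
      (H.edges.card = 3 * n - 8 ↔ (Iso H (G1 n) ∨ Iso H (G2 n)))) ∧
    ((G1 n).verts.card = n ∧ ¬ HasCopy pathP (G1 n) ∧ Connected (G1 n) ∧
      HasCopy triC (G1 n)) ∧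
    ((G2 n).verts.card = n ∧ ¬ HasCopy pathP (G2 n) ∧ Connected (G2 n) ∧
      HasCopy triC (G2 n)) := by
  refine ⟨?_, ?_, ?_, ?_⟩
  · intro H h1 h2 h3 h4
    exact (PfC.main_lemma n hn H h1 h2 h3 h4).1
  · intro H h1 h2 h3 h4
    constructor
    · exact (PfC.main_lemma n hn H h1 h2 h3 h4).2
    · rintro (hiso | hiso)
      · rw [PfC.iso_card_edges hiso]
        exact PfC.G1_card n hn
      · rw [PfC.iso_card_edges hiso]
        exact PfC.G2_card n hn
  · exact ⟨by rw [PfC.G1_verts]; exact Finset.card_range n, PfC.G1_pathP_free n,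
      PfC.G1_connected hn, PfC.G1_triC hn⟩
  · exact ⟨by rw [PfC.G2_verts]; exact Finset.card_range n, PfC.G2_pathP_free n,
      PfC.G2_connected hn, PfC.G2_triC hn⟩
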